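/- arXiv:2603.11934 — 6 statements merged into one kernel-verified Lean document; each statement's English description precedes it below -/
import Mathlib

section
/- Let n ≥ 1, k ≥ 2, 1 ≤ j ≤ n, and let x be a symbol with 1 ≤ x < k. If the string α = a₁a₂⋯a_{j−1} x k^{n−j} (i.e., a string of length n whose j-th symbol is x and whose last n−j symbols all equal k) is a necklace over the alphabet {1,…,k}, then the string a₁a₂⋯a_{j−1} (x+1) k^{n−j}, obtained by increasing the last non-k symbol by one, is also a necklace. -/
/-- `s` is a string over the alphabet `{1, 2, …, k}`. -/

lemma myGetD_append_right (l l' : List ℕ) (t : ℕ) (h : l.length ≤ t) :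
    (l ++ l').getD t 0 = l'.getD (t - l.length) 0 := by
  induction l generalizing t with
  | nil => simp
  | cons hd tl ih =>
    match t with
    | 0 => simp at h
    | t+1 =>
      simp only [List.cons_append, List.getD_cons_succ, List.length_cons]
      rw [ih t (by simpa using h)]
      congr 1
      omega

lemma myGetD_replicate (c m t : ℕ) (h : t < m) :
    (List.replicate m c).getD t 0 = c := by
  induction m generalizing t with
  | zero => omega
  | succ m ih =>
    match t with
    | 0 => simp [List.replicate_succ]
    | t+1 => simp only [List.replicate_succ, List.getD_cons_succ]; exact ih t (by omega)

lemma getD_str (a : List ℕ) (y c m t : ℕ) (ht : t < a.length + m + 1) :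
    (a ++ y :: List.replicate m c).getD t 0 =
      if t < a.length then a.getD t 0 else if t = a.length then y else c := by
  rcases lt_trichotomy t a.length with h | h | h
  · rw [if_pos h, List.getD_append _ _ _ _ h]
  · subst h
    rw [myGetD_append_right _ _ _ le_rfl]
    simp
  · rw [if_neg (by omega), if_neg (by omega), myGetD_append_right _ _ _ (by omega)]
    obtain ⟨u, hu⟩ : ∃ u, t - a.length = u + 1 := ⟨t - a.length - 1, by omega⟩
    rw [hu, List.getD_cons_succ, myGetD_replicate _ _ _ (by omega)]

lemma getD_rot (l : List ℕ) (i t : ℕ) (ht : t < l.length) :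
    (l.rotate i).getD t 0 = l.getD ((t + i) % l.length) 0 := by
  rw [List.getD_eq_getElem _ _ (by simpa using ht), List.getElem_rotate,
      List.getD_eq_getElem _ _ (Nat.mod_lt _ (by omega))]

lemma lex_lt (q : ℕ) : ∀ (s t : List ℕ), q < s.length → q < t.length →
    (∀ r, r < q → s.getD r 0 = t.getD r 0) → s.getD q 0 < t.getD q 0 → s < t := by
  induction q with
  | zero =>
    intro s t hs ht _ hlt
    match s, t with
    | a :: s', b :: t' => exact List.Lex.rel (by simpa using hlt)
  | succ q ih =>
    intro s t hs ht hagree hlt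
    match s, t with
    | a :: s', b :: t' =>
      have hab : a = b := by simpa using hagree 0 (by omega)
      subst hab
      exact List.Lex.cons (ih s' t' (by simpa using hs) (by simpa using ht)
        (fun r hr => by simpa using hagree (r + 1) (by omega)) (by simpa using hlt))

lemma eq_of_getD (s t : List ℕ) (hl : s.length = t.length)
    (h : ∀ r, r < s.length → s.getD r 0 = t.getD r 0) : s = t := by
  apply List.ext_getElem hl
  intro r h1 h2
  rw [← List.getD_eq_getElem s 0 h1, ← List.getD_eq_getElem t 0 h2]
  exact h r h1

lemma le_cases (s t : List ℕ) (hl : s.length = t.length) (h : s ≤ t) :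
    s = t ∨ ∃ q, q < s.length ∧ (∀ r, r < q → s.getD r 0 = t.getD r 0) ∧
      s.getD q 0 < t.getD q 0 := by
  by_cases hall : ∀ r, r < s.length → s.getD r 0 = t.getD r 0
  · exact Or.inl (eq_of_getD s t hl hall)
  · push_neg at hall
    have hex : ∃ r, r < s.length ∧ s.getD r 0 ≠ t.getD r 0 := hall
    right
    have hfl := (Nat.find_spec hex).1
    refine ⟨Nat.find hex, hfl, fun r hr => ?_, ?_⟩
    · by_contra hne
      have hrs : r < s.length := by omega
      exact Nat.find_min hex hr ⟨hrs, hne⟩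
    · rcases lt_trichotomy (s.getD (Nat.find hex) 0) (t.getD (Nat.find hex) 0) with hc | hc | hc
      · exact hc
      · exact absurd hc (Nat.find_spec hex).2
      · exfalso
        have : t < s := lex_lt (Nat.find hex) t s (hl ▸ (Nat.find_spec hex).1)
          (Nat.find_spec hex).1
          (fun r hr => by
            by_contra hne
            exact Nat.find_min hex hr ⟨by omega, fun he => hne he.symm⟩) hc
        exact absurd h (not_le.mpr this)

def IsStr (k : ℕ) (s : List ℕ) : Prop := ∀ x ∈ s, 1 ≤ x ∧ x ≤ k

/-- A necklace is a string that is lexicographically smallest among all of its rotations.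
(Lists of naturals carry the lexicographic linear order, where a proper prefix is
smaller than any of its extensions.) -/
def IsNecklace (s : List ℕ) : Prop := ∀ i : ℕ, s ≤ s.rotate i

/-- Property 1: if `α = a₁⋯a_{j-1} x k^{n-j}` is a necklace over `{1,…,k}` with `x < k`,
then increasing the last non-`k` symbol by one again yields a necklace. -/
theorem increment_last_nonk_necklace
    (k n j m x : ℕ) (a : List ℕ)
    (hn : 1 ≤ n) (hk : 2 ≤ k) (hj1 : 1 ≤ j) (hjn : j ≤ n)
    (ha : a.length = j - 1) (hm : m = n - j)
    (hx1 : 1 ≤ x) (hxk : x < k)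
    (hstr : IsStr k (a ++ x :: List.replicate m k))
    (hneck : IsNecklace (a ++ x :: List.replicate m k)) :
    IsNecklace (a ++ (x + 1) :: List.replicate m k) := by
  set α := a ++ x :: List.replicate m k with hαdef
  set β := a ++ (x + 1) :: List.replicate m k with hβdef
  set J := j - 1 with hJdef
  have haJ : a.length = J := ha
  have hJn : J < n := by omega
  have hlα : α.length = n := by
    simp only [hαdef, List.length_append, List.length_cons, List.length_replicate, haJ]
    omega
  have hlβ : β.length = n := by
    simp only [hβdef, List.length_append, List.length_cons, List.length_replicate, haJ]
    omega
  -- pointwise descriptions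
  have hαt : ∀ t, t < n → α.getD t 0 =
      if t < J then a.getD t 0 else if t = J then x else k := by
    intro t ht
    rw [hαdef, getD_str a x k m t (by rw [haJ]; omega), haJ]
  have hβt : ∀ t, t < n → β.getD t 0 =
      if t < J then a.getD t 0 else if t = J then x + 1 else k := by
    intro t ht
    rw [hβdef, getD_str a (x+1) k m t (by rw [haJ]; omega), haJ]
  have hαJ : α.getD J 0 = x := by rw [hαt J hJn]; simp
  have hβJ : β.getD J 0 = x + 1 := by rw [hβt J hJn]; simp
  have hαk : ∀ t, J < t → t < n → α.getD t 0 = k := by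
    intro t h1 h2
    rw [hαt t h2, if_neg (by omega), if_neg (by omega)]
  have hβα : ∀ t, t < n → t ≠ J → β.getD t 0 = α.getD t 0 := by
    intro t ht hne
    rw [hαt t ht, hβt t ht]
    by_cases h : t < J
    · simp [h]
    · rw [if_neg h, if_neg h, if_neg hne, if_neg hne]
  have hαle : ∀ t, t < n → α.getD t 0 ≤ k := by
    intro t ht
    have hmem : α.getD t 0 ∈ α := by
      rw [List.getD_eq_getElem _ _ (by omega)]
      exact List.getElem_mem _
    exact (hstr _ hmem).2
  -- main goal
  intro i0
  rw [← List.rotate_mod, hlβ]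
  set i := i0 % n with hidef
  have hin : i < n := Nat.mod_lt _ (by omega)
  by_cases hi0 : i = 0
  · rw [hi0, List.rotate_zero]
  have hipos : 0 < i := by omega
  -- rotation getD facts
  have hrotα : ∀ t, t < n → (α.rotate i).getD t 0 = α.getD ((t + i) % n) 0 := by
    intro t ht
    rw [getD_rot α i t (by omega), hlα]
  have hrotβ : ∀ t, t < n → (β.rotate i).getD t 0 = β.getD ((t + i) % n) 0 := by
    intro t ht
    rw [getD_rot β i t (by omega), hlβ]
  have hmodinv : ∀ t, t < n → ((t + i) % n + (n - i)) % n = t := by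
    intro t ht
    rw [Nat.mod_add_mod]
    have h1 : t + i + (n - i) = t + n := by omega
    rw [h1, Nat.add_mod_right, Nat.mod_eq_of_lt ht]
  set P := (J + (n - i)) % n with hPdef
  have hPn : P < n := Nat.mod_lt _ (by omega)
  have hPi : (P + i) % n = J := by
    rw [hPdef, Nat.mod_add_mod]
    have h1 : J + (n - i) + i = J + n := by omega
    rw [h1, Nat.add_mod_right, Nat.mod_eq_of_lt hJn]
  have hinj : ∀ t, t < n → (t + i) % n = J → t = P := by
    intro t ht htJ
    have := hmodinv t ht
    rw [htJ] at this
    rw [hPdef, this]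
  have hmodlt : ∀ t, (t + i) % n < n := fun t => Nat.mod_lt _ (by omega)
  have hrotβα : ∀ t, t < n → t ≠ P → (β.rotate i).getD t 0 = (α.rotate i).getD t 0 := by
    intro t ht hne
    rw [hrotβ t ht, hrotα t ht]
    exact hβα _ (hmodlt t) (fun h => hne (hinj t ht h))
  have hrotαP : (α.rotate i).getD P 0 = x := by rw [hrotα P hPn, hPi, hαJ]
  have hrotβP : (β.rotate i).getD P 0 = x + 1 := by rw [hrotβ P hPn, hPi, hβJ]
  have hlrotβ : (β.rotate i).length = n := by rw [List.length_rotate, hlβ]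
  have hlrotα : (α.rotate i).length = n := by rw [List.length_rotate, hlα]
  -- use necklace hypothesis
  rcases le_cases α (α.rotate i) (by rw [hlα, hlrotα]) (hneck i) with hall | ⟨q, hq, hagree, hlt⟩
  · -- Case A : α = α.rotate i
    have hall' : ∀ t, t < n → α.getD t 0 = (α.rotate i).getD t 0 := by
      intro t ht; exact congrArg (fun l => l.getD t 0) hall
    by_cases hPJ : P = J
    · apply le_of_eq
      apply eq_of_getD β (β.rotate i) (by rw [hlβ, hlrotβ])
      intro t ht
      rw [hlβ] at ht
      by_cases htJ : t = J
      · rw [htJ, hβJ, ← hPJ, hrotβP]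
      · rw [hβα t ht htJ, hall' t ht, hrotβα t ht (by rw [hPJ]; exact htJ)]
    · have hPltJ : P < J := by
        rcases lt_trichotomy P J with h | h | h
        · exact h
        · exact absurd h hPJ
        · exfalso
          have h1 : α.getD P 0 = k := hαk P h hPn
          have h2 : α.getD P 0 = x := by rw [hall' P hPn, hrotαP]
          omega
      apply le_of_lt
      apply lex_lt P β (β.rotate i) (by omega) (by omega)
      · intro r hr
        rw [hβα r (by omega) (by omega), hall' r (by omega),
          hrotβα r (by omega) (by omega)]
      · rw [hβα P hPn (by omega), hall' P hPn, hrotαP, hrotβP]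
        omega
  · -- Case B
    rw [hlα] at hq
    have hagree' : ∀ r, r < q → α.getD r 0 = (α.rotate i).getD r 0 := hagree
    have hrotle : (α.rotate i).getD q 0 ≤ k := by
      rw [hrotα q hq]; exact hαle _ (hmodlt q)
    have hqJ : q ≤ J := by
      by_contra h
      have := hαk q (by omega) hq
      omega
    rcases lt_trichotomy P q with hPq | hPq | hPq
    · -- P < q
      apply le_of_lt
      apply lex_lt P β (β.rotate i) (by omega) (by omega)
      · intro r hr
        rw [hβα r (by omega) (by omega), hagree' r (by omega),
          hrotβα r (by omega) (by omega)]
      · have h1 : α.getD P 0 = x := by rw [hagree' P hPq, hrotαP]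
        rw [hβα P hPn (by omega), h1, hrotβP]
        omega
    · -- P = q
      have hαqx : (α.rotate i).getD q 0 = x := by rw [← hPq, hrotαP]
      have hqltJ : q < J := by
        rcases lt_or_eq_of_le hqJ with h | h
        · exact h
        · exfalso; rw [hαqx, h, hαJ] at hlt; omega
      apply le_of_lt
      apply lex_lt q β (β.rotate i) (by omega) (by omega)
      · intro r hr
        rw [hβα r (by omega) (by omega), hagree' r (by omega),
          hrotβα r (by omega) (by omega)]
      · rw [hβα q (by omega) (by omega), ← hPq, hrotβP, hPq]
        rw [hαqx] at hlt
        omega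
    · -- q < P
      by_cases hqltJ : q < J
      · apply le_of_lt
        apply lex_lt q β (β.rotate i) (by omega) (by omega)
        · intro r hr
          rw [hβα r (by omega) (by omega), hagree' r (by omega),
            hrotβα r (by omega) (by omega)]
        · rw [hβα q (by omega) (by omega), hrotβα q (by omega) (by omega)]
          exact hlt
      · have hqJe : q = J := by omega
        have hJP : J < P := by omega
        have hiJ : J < i := by
          by_contra h
          push_neg at h
          have h1 : P = J - i := by
            rw [hPdef]
            have : J + (n - i) = (J - i) + n := by omega
            rw [this, Nat.add_mod_right, Nat.mod_eq_of_lt (by omega)]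
          omega
        -- all of a is k
        have hak : ∀ r, r < J → α.getD r 0 = k := by
          intro r
          induction r using Nat.strong_induction_on with
          | _ r ih =>
            intro hrJ
            have h1 : α.getD r 0 = α.getD ((r + i) % n) 0 := by
              rw [hagree' r (by omega), hrotα r (by omega)]
            by_cases hr : r + i < n
            · rw [Nat.mod_eq_of_lt hr] at h1
              rw [h1]
              exact hαk (r + i) (by omega) hr
            · have h2 : (r + i) % n = r + i - n := by
                rw [Nat.mod_eq_sub_mod (by omega)]
                exact Nat.mod_eq_of_lt (by omega)
              rw [h2] at h1
              rw [h1]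
              exact ih (r + i - n) (by omega) (by omega)
        by_cases hJ0 : J = 0
        · -- j = 1
          have hrotα0 : (α.rotate i).getD 0 0 = k := by
            rw [hrotα 0 (by omega)]
            have : (0 + i) % n = i := by rw [Nat.zero_add, Nat.mod_eq_of_lt hin]
            rw [this]
            exact hαk i (by omega) hin
          by_cases hxk1 : x + 1 < k
          · apply le_of_lt
            apply lex_lt 0 β (β.rotate i) (by omega) (by omega)
            · intro r hr; omega
            · rw [hJ0] at hβJ
              rw [hβJ, hrotβα 0 (by omega) (by omega), hrotα0]
              exact hxk1
          · -- x + 1 = k, β = replicate n k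
            have hxk2 : x + 1 = k := by omega
            have hanil : a = [] := List.eq_nil_of_length_eq_zero (by omega)
            have hβrep : β = List.replicate n k := by
              rw [hβdef, hanil, hxk2, List.nil_append, ← List.replicate_succ]
              congr 1
              omega
            rw [hβrep, List.rotate_replicate]
        · -- J ≥ 1 : contradiction with necklace at rotation J
          exfalso
          have hneJ := hneck J
          have hlrotJ : (α.rotate J).length = n := by rw [List.length_rotate, hlα]
          have hlt2 : α.rotate J < α := by
            apply lex_lt 0 (α.rotate J) α (by omega) (by omega)
            · intro r hr; omega
            · have h1 : (α.rotate J).getD 0 0 = x := by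
                rw [getD_rot α J 0 (by omega), hlα, Nat.zero_add,
                  Nat.mod_eq_of_lt hJn, hαJ]
              have h2 : α.getD 0 0 = k := hak 0 (by omega)
              rw [h1, h2]
              omega
          exact absurd hneJ (not_le.mpr hlt2)
end

section
/- Let n, k > 1 and w < kn, and let α and β be necklaces in S_k(n,w↑) that are consecutive in lexicographic order (i.e., α < β and no necklace in S_k(n,w↑) lies strictly between α and β). If α is periodic, then α is a prefix of the concatenation ap(α)·ap(β); moreover β is aperiodic. -/
/-- `listPow t j` is `j` copies of `t` concatenated. -/
def listPow (t : List ℕ) : ℕ → List ℕ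
  | 0 => []
  | j + 1 => t ++ listPow t j

/-- `t` is the aperiodic prefix of `s`: the shortest string some power of which is `s`. -/
def IsApOf (t s : List ℕ) : Prop :=
  (∃ j, 1 ≤ j ∧ s = listPow t j) ∧
  ∀ u m, 1 ≤ m → s = listPow u m → t.length ≤ u.length

/-- `s` is aperiodic: its aperiodic prefix is `s` itself. -/
def ListAperiodic (s : List ℕ) : Prop := IsApOf s s

/- ## Order helpers -/

lemma lt_of_agree (x y : List ℕ) (i : ℕ) (hx : i < x.length) (hy : i < y.length)
    (hagree : ∀ j (hj1 : j < x.length) (hj2 : j < y.length), j < i → x[j] = y[j])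
    (hdiff : x[i] < y[i]) : x < y := by
  show List.Lex (·<·) x y
  induction i generalizing x y with
  | zero =>
    cases x with | nil => simp at hx | cons a as =>
    cases y with | nil => simp at hy | cons b bs =>
    exact List.Lex.rel (by simpa using hdiff)
  | succ i ih =>
    cases x with | nil => simp at hx | cons a as =>
    cases y with | nil => simp at hy | cons b bs =>
    have hab : a = b := hagree 0 (by simp) (by simp) (by omega)
    subst hab
    exact List.Lex.cons (ih as bs (by simpa using hx) (by simpa using hy)
      (fun j hj1 hj2 hji => by
        have := hagree (j+1) (by simpa using hj1) (by simpa using hj2) (by omega)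
        simpa using this)
      (by simpa using hdiff))

lemma head_le_of_le (x y : List ℕ) (hx : 0 < x.length) (hy : 0 < y.length) (h : x ≤ y) :
    x[0] ≤ y[0] := by
  by_contra hc
  push_neg at hc
  exact absurd (lt_of_agree y x 0 hy hx (by omega) hc) (not_lt.mpr h)

lemma lt_of_agree' (x y : List ℕ) (i : ℕ) (hx : i < x.length) (hy : i < y.length)
    (hagree : ∀ j, j < i → x.getD j 0 = y.getD j 0)
    (hdiff : x.getD i 0 < y.getD i 0) : x < y := by
  refine lt_of_agree x y i hx hy (fun j hj1 hj2 hji => ?_) ?_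
  · have := hagree j hji
    rwa [List.getD_eq_getElem _ _ hj1, List.getD_eq_getElem _ _ hj2] at this
  · rwa [List.getD_eq_getElem _ _ hx, List.getD_eq_getElem _ _ hy] at hdiff

lemma exists_first_diff (x y : List ℕ) (hlen : x.length = y.length) (hne : x ≠ y) :
    ∃ i, i < x.length ∧ (∀ j, j < i → x.getD j 0 = y.getD j 0) ∧ x.getD i 0 ≠ y.getD i 0 := by
  have hP : ∃ i, x.getD i 0 ≠ y.getD i 0 := by
    by_contra hall
    push_neg at hall
    exact hne (List.ext_getElem hlen (fun n h1 h2 => by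
      have := hall n
      rwa [List.getD_eq_getElem _ _ h1, List.getD_eq_getElem _ _ h2] at this))
  classical
  refine ⟨Nat.find hP, ?_, fun j hj => not_ne_iff.mp (Nat.find_min hP hj), Nat.find_spec hP⟩
  by_contra hge
  push_neg at hge
  exact Nat.find_spec hP (by
    rw [List.getD_eq_default _ _ hge, List.getD_eq_default _ _ (hlen ▸ hge)])

lemma first_diff_of_lt (x y : List ℕ) (hlen : x.length = y.length) (hxy : x < y) :
    ∃ i, i < x.length ∧ (∀ j, j < i → x.getD j 0 = y.getD j 0) ∧ x.getD i 0 < y.getD i 0 := by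
  obtain ⟨i, hi, hagree, hne⟩ := exists_first_diff x y hlen (ne_of_lt hxy)
  rcases lt_or_gt_of_ne hne with h | h
  · exact ⟨i, hi, hagree, h⟩
  · exact absurd (lt_of_agree' y x i (hlen ▸ hi) hi
      (fun j hj => (hagree j hj).symm) h) (lt_asymm hxy)

lemma getD_rotate (l : List ℕ) (m i : ℕ) (hi : i < l.length) :
    (l.rotate m).getD i 0 = l.getD ((i + m) % l.length) 0 := by
  have h1 : i < (l.rotate m).length := by rwa [List.length_rotate]
  have h2 : (i + m) % l.length < l.length := Nat.mod_lt _ (by omega)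
  rw [List.getD_eq_getElem _ _ h1, List.getD_eq_getElem _ _ h2, List.getElem_rotate]

/- ## listPow helpers -/

lemma length_listPow (t : List ℕ) (j : ℕ) : (listPow t j).length = j * t.length := by
  induction j with
  | zero => simp [listPow]
  | succ j ih => simp [listPow, ih]; ring

lemma listPow_add (t : List ℕ) (i j : ℕ) :
    listPow t (i + j) = listPow t i ++ listPow t j := by
  induction i with
  | zero => simp [listPow]
  | succ i ih =>
    have : i + 1 + j = (i + j) + 1 := by omega
    rw [this, listPow, listPow, ih, List.append_assoc]

lemma listPow_one (t : List ℕ) : listPow t 1 = t := by simp [listPow]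

lemma sum_listPow (t : List ℕ) (j : ℕ) : (listPow t j).sum = j * t.sum := by
  induction j with
  | zero => simp [listPow]
  | succ j ih => simp [listPow, ih]; ring

lemma mem_listPow (t : List ℕ) (j : ℕ) (x : ℕ) (hx : x ∈ listPow t j) : x ∈ t := by
  induction j with
  | zero => simp [listPow] at hx
  | succ j ih =>
    simp only [listPow, List.mem_append] at hx
    exact hx.elim id ih

lemma listPow_listPow (t : List ℕ) (m j : ℕ) :
    listPow (listPow t m) j = listPow t (j * m) := by
  induction j with
  | zero => simp [listPow]
  | succ j ih =>
    rw [listPow, ih, ← listPow_add]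
    congr 1
    ring

lemma prefix_listPow (t : List ℕ) (j : ℕ) (hj : 1 ≤ j) : t <+: listPow t j := by
  obtain ⟨j', rfl⟩ : ∃ j', j = j' + 1 := ⟨j - 1, by omega⟩
  exact List.prefix_append t _

lemma getD_listPow (t : List ℕ) (j i : ℕ) (ht : t ≠ []) (hi : i < j * t.length) :
    (listPow t j).getD i 0 = t.getD (i % t.length) 0 := by
  have htl : 0 < t.length := List.length_pos_iff.mpr ht
  induction j generalizing i with
  | zero => omega
  | succ j ih =>
    show (t ++ listPow t j).getD i 0 = _
    have hexp : (j+1)*t.length = j*t.length + t.length := by ring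
    rcases lt_or_ge i t.length with h | h
    · rw [List.getD_append _ _ _ _ h, Nat.mod_eq_of_lt h]
    · rw [List.getD_append_right _ _ _ _ h, ih (i - t.length) (by omega),
        ← Nat.mod_eq_sub_mod h]

lemma take_listPow (a : List ℕ) (d m : ℕ) (hm : m ≤ d) :
    (listPow a d).take (m * a.length) = listPow a m := by
  have : d = m + (d - m) := by omega
  rw [this, listPow_add, ← length_listPow, List.take_left]

/- ## Commuting words -/

lemma listPow_nil (j : ℕ) : listPow ([] : List ℕ) j = [] := by
  induction j with
  | zero => rfl
  | succ j ih => simp [listPow, ih]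

lemma append_comm_power_aux : ∀ N (u v : List ℕ), u.length + v.length ≤ N →
    u ++ v = v ++ u → ∃ w i j, u = listPow w i ∧ v = listPow w j := by
  intro N
  induction N with
  | zero =>
    intro u v hlen _
    have hu : u = [] := List.length_eq_zero_iff.mp (by omega)
    have hv : v = [] := List.length_eq_zero_iff.mp (by omega)
    exact ⟨[], 0, 0, by simp [hu, listPow], by simp [hv, listPow]⟩
  | succ N ih =>
    have main : ∀ u v : List ℕ, u.length ≤ v.length → u.length + v.length ≤ N + 1 →
        u ++ v = v ++ u → ∃ w i j, u = listPow w i ∧ v = listPow w j := by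
      intro u v hle hlen h
      rcases eq_or_ne u [] with rfl | hu
      · exact ⟨v, 0, 1, by simp [listPow], by simp [listPow]⟩
      · have hul : 0 < u.length := List.length_pos_iff.mpr hu
        have huv2 : v.take u.length = u := by
          have h1 : (u ++ v).take u.length = u := List.take_left
          rw [h, List.take_append_of_le_length hle] at h1
          exact h1
        have hv2 : v = u ++ v.drop u.length := by
          conv_lhs => rw [← List.take_append_drop u.length v, huv2]
        set v' := v.drop u.length with hv'
        have hcomm : u ++ v' = v' ++ u := by
          have := h
          rw [hv2, List.append_assoc] at this
          have := List.append_cancel_left ((by simpa [List.append_assoc] using this) :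
            u ++ (u ++ v') = u ++ (v' ++ u))
          exact this
        have hlen' : u.length + v'.length ≤ N := by
          have : v'.length = v.length - u.length := by simp [hv']
          omega
        obtain ⟨w, i, j, hui, hvj⟩ := ih u v' hlen' hcomm
        exact ⟨w, i, i + j, hui, by rw [hv2, hui, hvj, listPow_add]⟩
    intro u v hlen h
    rcases le_or_gt u.length v.length with hle | hle
    · exact main u v hle hlen h
    · obtain ⟨w, i, j, h1, h2⟩ := main v u (le_of_lt hle) (by omega) h.symm
      exact ⟨w, j, i, h2, h1⟩

lemma append_comm_power (u v : List ℕ) (h : u ++ v = v ++ u) :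
    ∃ w i j, u = listPow w i ∧ v = listPow w j :=
  append_comm_power_aux (u.length + v.length) u v le_rfl h

lemma rotate_eq_self_power (a : List ℕ) (r : ℕ) (hr0 : 0 < r) (hrp : r < a.length)
    (hfix : a.rotate r = a) : ∃ w m, w.length < a.length ∧ 1 ≤ m ∧ a = listPow w m := by
  set u := a.take r with hu
  set v := a.drop r with hv
  have huv : u ++ v = a := List.take_append_drop r a
  have hvu : v ++ u = a := by
    rw [← hfix]
    exact (List.rotate_eq_drop_append_take (le_of_lt hrp)).symm
  obtain ⟨w, i, j, hui, hvj⟩ := append_comm_power u v (by rw [huv, hvu])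
  have hul : u.length = r := by rw [hu, List.length_take]; omega
  have hw : w ≠ [] := by
    rintro rfl
    rw [listPow_nil] at hui
    have := congrArg List.length hui
    rw [hul] at this
    simp at this
    omega
  have hwl : 0 < w.length := List.length_pos_iff.mpr hw
  have hi : 1 ≤ i := by
    rcases Nat.eq_zero_or_pos i with rfl | hi
    · exfalso
      simp [listPow] at hui
      rw [hui] at hul
      simp at hul
      omega
    · exact hi
  have hwu : w.length ≤ u.length := by
    have := congrArg List.length hui
    rw [length_listPow] at this
    nlinarith
  refine ⟨w, i + j, by omega, by omega, ?_⟩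
  rw [← huv, hui, hvj, listPow_add]

/- ## Aperiodic root -/

lemma exists_ap_root (s : List ℕ) (hs : s ≠ []) :
    ∃ t, IsApOf t s ∧ (∀ u m, 1 ≤ m → t = listPow u m → t.length ≤ u.length) := by
  classical
  have hP : ∃ q, ∃ u : List ℕ, u.length = q ∧ ∃ m, 1 ≤ m ∧ s = listPow u m :=
    ⟨s.length, s, rfl, 1, le_rfl, by rw [listPow_one]⟩
  obtain ⟨t, htl, m0, hm0, hsm0⟩ := Nat.find_spec hP
  have hmin : ∀ u (m : ℕ), 1 ≤ m → s = listPow u m → t.length ≤ u.length := by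
    intro u m hm hsu
    rw [htl]
    exact Nat.find_min' hP ⟨u, rfl, m, hm, hsu⟩
  refine ⟨t, ⟨⟨m0, hm0, hsm0⟩, hmin⟩, ?_⟩
  intro u m hm htu
  have : s = listPow u (m * m0) := by
    rw [hsm0, htu, listPow_listPow]
    congr 1
    ring
  exact hmin u (m * m0) (Nat.mul_pos hm hm0) this

/- ## Lyndon strictness -/

lemma lyndon_strict (a : List ℕ) (d : ℕ) (hd : 2 ≤ d)
    (hap : ∀ u m, 1 ≤ m → a = listPow u m → a.length ≤ u.length)
    (hneck : IsNecklace (listPow a d)) (ha : a ≠ [])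
    (r : ℕ) (hr0 : 0 < r) (hrp : r < a.length) :
    ∃ h, h < a.length ∧ (∀ j, j < h → a.getD j 0 = a.getD ((j + r) % a.length) 0) ∧
      a.getD h 0 < a.getD ((h + r) % a.length) 0 := by
  set p := a.length with hp
  have hpl : 0 < p := List.length_pos_iff.mpr ha
  set ρ := a.rotate r with hρ
  have hρlen : ρ.length = p := by simp [hρ, hp]
  have hρD : ∀ j, j < p → ρ.getD j 0 = a.getD ((j + r) % p) 0 := fun j hj =>
    getD_rotate a r j hj
  have hne : a ≠ ρ := by
    intro heq
    obtain ⟨w, m, hwl, hm, haw⟩ := rotate_eq_self_power a r hr0 hrp heq.symm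
    exact absurd (hap w m hm haw) (by omega)
  obtain ⟨i, hi, hagree, hdiff⟩ := exists_first_diff a ρ (by omega) hne
  rcases lt_or_gt_of_ne hdiff with h | h
  · exact ⟨i, hi, fun j hj => by rw [hagree j hj, hρD j (by omega)], by
      rw [← hρD i hi]; exact h⟩
  · exfalso
    -- the rotation of listPow a d by r is smaller, contradicting necklace
    set A := listPow a d with hA
    have hAlen : A.length = d * p := length_listPow a d
    have hAD : ∀ m, m < d * p → A.getD m 0 = a.getD (m % p) 0 := fun m hm =>
      getD_listPow a d m ha hm
    have hpd : p ≤ d * p := by nlinarith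
    have hlt : A.rotate r < A := by
      refine lt_of_agree' (A.rotate r) A i (by rw [List.length_rotate, hAlen]; omega)
        (by rw [hAlen]; omega) ?_ ?_
      · intro j hj
        have hjp : j < p := by omega
        have hjr : j + r < d * p := by nlinarith
        rw [getD_rotate A r j (by omega), hAlen, Nat.mod_eq_of_lt (by nlinarith),
          hAD (j + r) hjr, hAD j (by nlinarith)]
        have : a.getD ((j + r) % p) 0 = a.getD (j % p) 0 := by
          rw [← hρD j hjp, ← hagree j hj, Nat.mod_eq_of_lt hjp]
        exact this
      · have hir : i + r < d * p := by nlinarith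
        rw [getD_rotate A r i (by omega), hAlen, Nat.mod_eq_of_lt (by nlinarith),
          hAD (i + r) hir, hAD i (by nlinarith), Nat.mod_eq_of_lt hi, ← hρD i hi]
        exact h
    exact absurd (hneck r) (not_le.mpr hlt)

/- ## The padded string is a necklace -/

lemma pad_necklace (k : ℕ) (a : List ℕ) (d e p n z : ℕ)
    (hp : p = a.length) (hpl : 0 < p) (hd : 2 ≤ d) (hde : d = e + 1) (hn : n = d * p)
    (hstr : ∀ x ∈ a, x ≤ k)
    (hap : ∀ u m, 1 ≤ m → a = listPow u m → a.length ≤ u.length)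
    (hneck : IsNecklace (listPow a d))
    (hz : z < p) (hzk : a.getD z 0 < k) (hzmin : ∀ m, m < z → a.getD m 0 = k)
    (h0 : a.getD 0 0 < k) :
    IsNecklace (listPow a e ++ List.replicate p k) := by
  have ha : a ≠ [] := by rw [← List.length_pos_iff, ← hp]; exact hpl
  have he1 : 1 ≤ e := by omega
  set γ := listPow a e ++ List.replicate p k with hγ
  have hq1 : e * p + p = n := by rw [hn, hde]; ring
  have hpep : p ≤ e * p := by calc p = 1 * p := by ring
                                _ ≤ e * p := Nat.mul_le_mul_right p he1
  have hγlen : γ.length = n := by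
    rw [hγ, List.length_append, length_listPow, List.length_replicate, ← hp, hq1]
  have hg : ∀ m, m < n → γ.getD m 0 = if m < e * p then a.getD (m % p) 0 else k := by
    intro m hm
    rw [hγ]
    rcases lt_or_ge m (e * p) with h | h
    · rw [if_pos h, List.getD_append _ _ _ _ (by rw [length_listPow, ← hp]; exact h),
        getD_listPow a e m ha (by rw [← hp]; exact h), hp]
    · rw [if_neg (not_lt.mpr h), List.getD_append_right _ _ _ _ (by rw [length_listPow, ← hp]; exact h)]
      rw [length_listPow, ← hp]
      have hlt : m - e * p < p := by omega
      rw [List.getD_eq_getElem _ _ (by rw [List.length_replicate]; exact hlt),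
        List.getElem_replicate]
  have hgk : ∀ m, m < n → γ.getD m 0 ≤ k := by
    intro m hm
    rw [hg m hm]
    split
    · have hmp : m % p < p := Nat.mod_lt _ hpl
      rw [List.getD_eq_getElem _ _ (by omega : m % p < a.length)]
      exact hstr _ (List.getElem_mem _)
    · exact le_rfl
  have hnpos : 0 < n := by omega
  have haD : ∀ m, m < p → a.getD m 0 ≤ k := by
    intro m hm
    rw [List.getD_eq_getElem _ _ (by omega : m < a.length)]
    exact hstr _ (List.getElem_mem _)
  intro i
  rw [← List.rotate_mod, hγlen]
  obtain ⟨i', hi'eq, hi'n⟩ : ∃ i', i % n = i' ∧ i' < n := ⟨i % n, rfl, Nat.mod_lt _ hnpos⟩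
  rw [hi'eq]
  rcases Nat.eq_zero_or_pos i' with hz0 | hi'0
  · rw [hz0, List.rotate_zero]
  have hrotD : ∀ jj, jj < n → (γ.rotate i').getD jj 0 = γ.getD ((jj + i') % n) 0 := by
    intro jj hjj
    rw [getD_rotate γ i' jj (by omega : jj < γ.length), hγlen]
  have hrotlen : (γ.rotate i').length = n := by rw [List.length_rotate, hγlen]
  apply le_of_lt
  -- case A : rotation starts in the k-block
  rcases le_or_gt (e * p) i' with hA | hB
  · refine lt_of_agree' γ (γ.rotate i') 0 (by rw [hγlen]; omega) (by rw [hrotlen]; omega)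
      (by omega) ?_
    rw [hrotD 0 hnpos, hg 0 (by omega), if_pos (by omega), Nat.zero_add,
      Nat.mod_eq_of_lt hi'n, hg i' hi'n, if_neg (not_lt.mpr hA)]
    simpa using h0
  -- case B : i' < e * p
  obtain ⟨c, r, hi'cr, hrp⟩ : ∃ c r, c * p + r = i' ∧ r < p :=
    ⟨i' / p, i' % p, by rw [Nat.mul_comm]; exact Nat.div_add_mod i' p, Nat.mod_lt _ hpl⟩
  have hcp1 : c * p + p ≤ e * p := by
    have hclt : c < e := by
      by_contra hcc
      push_neg at hcc
      have : e * p ≤ c * p := Nat.mul_le_mul_right p hcc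
      omega
    calc c * p + p = (c+1)*p := by ring
      _ ≤ e * p := Nat.mul_le_mul_right p hclt
  rcases Nat.eq_zero_or_pos r with hr0 | hr0
  -- case B1 : r = 0
  · have hc1 : 1 ≤ c := by
      rcases Nat.eq_zero_or_pos c with h' | h'
      · exfalso
        have : c * p = 0 := by rw [h']; ring
        omega
      · exact h'
    have hecp : (e - c) * p + c * p = e * p := by
      have h1 : (e - c) + c = e := by
        have : c < e := by
          by_contra hcc
          push_neg at hcc
          have := Nat.mul_le_mul_right p hcc
          omega
        omega
      calc (e - c) * p + c * p = ((e - c) + c) * p := by ring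
        _ = e * p := by rw [h1]
    have hpcp : p ≤ c * p := by calc p = 1*p := by ring
                                  _ ≤ c*p := Nat.mul_le_mul_right p hc1
    have hxn : z + (e - c) * p < n := by omega
    refine lt_of_agree' γ (γ.rotate i') (z + (e - c) * p) (by rw [hγlen]; omega)
      (by rw [hrotlen]; omega) ?_ ?_
    · intro j hj
      rw [hrotD j (by omega), Nat.mod_eq_of_lt (by omega : j + i' < n)]
      rcases lt_or_ge j ((e - c) * p) with hj1 | hj1
      · rw [hg j (by omega), if_pos (by omega), hg (j + i') (by omega),
          if_pos (by omega)]
        have : j + i' = j + c * p := by omega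
        rw [this, Nat.add_mul_mod_self_right]
      · have hm' : j - (e - c) * p < z := by omega
        have hj2 : j = (j - (e - c) * p) + (e - c) * p := by omega
        rw [hg j (by omega), if_pos (by omega), hg (j + i') (by omega),
          if_neg (by omega)]
        rw [hj2, Nat.add_mul_mod_self_right, Nat.mod_eq_of_lt (by omega), hzmin _ hm']
    · rw [hrotD (z + (e - c) * p) (by omega),
        Nat.mod_eq_of_lt (by omega : z + (e - c) * p + i' < n),
        hg (z + (e - c) * p) (by omega), if_pos (by omega),
        hg (z + (e - c) * p + i') (by omega), if_neg (by omega)]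
      rw [Nat.add_mul_mod_self_right, Nat.mod_eq_of_lt (by omega)]
      exact hzk
  -- case B2 : r > 0
  · obtain ⟨h, hhp, hagA, hdiffA⟩ := lyndon_strict a d hd hap hneck ha r hr0 (by omega)
    rw [← hp] at hhp hagA hdiffA
    rcases lt_or_ge (c * p + r + h) (e * p) with hC1 | hC1
    -- case B2I
    · have hhn : h < n := by omega
      refine lt_of_agree' γ (γ.rotate i') h (by rw [hγlen]; omega)
        (by rw [hrotlen]; omega) ?_ ?_
      · intro j hj
        rw [hrotD j (by omega), Nat.mod_eq_of_lt (by omega : j + i' < n),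
          hg j (by omega), if_pos (by omega), hg (j + i') (by omega), if_pos (by omega)]
        have hrw : j + i' = (j + r) + c * p := by omega
        rw [hrw, Nat.add_mul_mod_self_right, Nat.mod_eq_of_lt (by omega : j < p)]
        exact hagA j hj
      · rw [hrotD h (by omega), Nat.mod_eq_of_lt (by omega : h + i' < n),
          hg h (by omega), if_pos (by omega), hg (h + i') (by omega), if_pos (by omega)]
        have hrw : h + i' = (h + r) + c * p := by omega
        rw [hrw, Nat.add_mul_mod_self_right, Nat.mod_eq_of_lt (by omega : h < p)]
        exact hdiffA
    -- case B2II : border case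
    · have hce : c * p + p = e * p := by
        rcases lt_or_ge (c + 1) e with h2 | h2
        · exfalso
          have : (c+2) * p ≤ e * p := Nat.mul_le_mul_right p (by omega : c + 2 ≤ e)
          have h3 : c*p + 2*p ≤ e*p := by calc c*p+2*p = (c+2)*p := by ring
                                            _ ≤ e*p := this
          omega
        · rcases lt_or_ge c e with h3 | h3
          · have h4 : c + 1 = e := by omega
            calc c * p + p = (c+1)*p := by ring
              _ = e * p := by rw [h4]
          · exfalso
            have := Nat.mul_le_mul_right p h3
            omega
      have hpr : p - r ≤ h := by
        by_contra hcon
        push_neg at hcon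
        omega
      have hborder : ∀ j, j < p - r → a.getD j 0 = a.getD (j + r) 0 := by
        intro j hj
        have := hagA j (by omega)
        rwa [Nat.mod_eq_of_lt (by omega : j + r < p)] at this
      have hE : ∃ j0, (p - r ≤ j0 ∧ j0 < 2 * p - r ∧ j0 < n ∧ γ.getD j0 0 < k) := by
        rcases lt_or_ge 1 e with he2 | he2
        · have hpe : p < e * p := by
            have : 2 * p ≤ e * p := Nat.mul_le_mul_right p he2
            omega
          refine ⟨p, by omega, by omega, by omega, ?_⟩
          rw [hg p (by omega), if_pos hpe]
          simpa [Nat.mod_self] using h0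
        · have hee : e = 1 := by omega
          have heep : e * p = p := by rw [hee]; ring
          have hsome : ∃ j0, p - r ≤ j0 ∧ j0 < p ∧ a.getD j0 0 < k := by
            by_contra hall
            push_neg at hall
            have hkk : ∀ j, p - r ≤ j → j < p → a.getD j 0 = k := by
              intro j h1 h2
              exact le_antisymm (haD j h2) (hall j h1 h2)
            have key : ∀ m j, j < p → p ≤ j + m → a.getD j 0 = k := by
              intro m
              induction m with
              | zero => intro j h1 h2; omega
              | succ m ih =>
                intro j h1 h2
                rcases le_or_gt (p - r) j with h3 | h3
                · exact hkk j h3 h1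
                · rw [hborder j h3]
                  exact ih (j + r) (by omega) (by omega)
            have := key p 0 hpl (by omega)
            omega
          obtain ⟨j0, hj1, hj2, hj3⟩ := hsome
          refine ⟨j0, hj1, by omega, by omega, ?_⟩
          rw [hg j0 (by omega), if_pos (by omega), Nat.mod_eq_of_lt hj2]
          exact hj3
      classical
      have hQ : ∃ j, p - r ≤ j ∧ j < n ∧ γ.getD j 0 < k := by
        obtain ⟨j0, h1, h2, h3, h4⟩ := hE
        exact ⟨j0, h1, h3, h4⟩
      obtain ⟨hy1, hy2, hy3⟩ := Nat.find_spec hQ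
      have hy4 : Nat.find hQ < 2 * p - r := by
        obtain ⟨j0, h1, h2, h3, h4⟩ := hE
        have := Nat.find_min' hQ ⟨h1, h3, h4⟩
        omega
      set y := Nat.find hQ with hy
      refine lt_of_agree' γ (γ.rotate i') y (by rw [hγlen]; omega)
        (by rw [hrotlen]; omega) ?_ ?_
      · intro j hj
        rw [hrotD j (by omega), Nat.mod_eq_of_lt (by omega : j + i' < n)]
        rcases lt_or_ge j (p - r) with h1 | h1
        · rw [hg j (by omega), if_pos (by omega), hg (j + i') (by omega), if_pos (by omega)]
          have hrw : j + i' = (j + r) + c * p := by omega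
          rw [hrw, Nat.add_mul_mod_self_right, Nat.mod_eq_of_lt (by omega : j + r < p),
            Nat.mod_eq_of_lt (by omega : j < p)]
          exact hborder j h1
        · have hjk : γ.getD j 0 = k := by
            have hnot := Nat.find_min hQ (show j < y from hj)
            push_neg at hnot
            rcases lt_or_ge j n with hjn | hjn
            · refine le_antisymm (hgk j hjn) ?_
              by_contra hcon
              push_neg at hcon
              exact absurd (hnot h1 hjn) (by omega)
            · omega
          rw [hjk, hg (j + i') (by omega), if_neg (by omega)]
      · rw [hrotD y (by omega), Nat.mod_eq_of_lt (by omega : y + i' < n),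
          hg (y + i') (by omega), if_neg (by omega)]
        exact hy3

/- ## getD of padded string -/

lemma getD_pad (a : List ℕ) (k e p n : ℕ) (hp : p = a.length) (hpl : 0 < p)
    (hq1 : e * p + p = n) :
    ∀ m, m < n → (listPow a e ++ List.replicate p k).getD m 0 =
      if m < e * p then a.getD (m % p) 0 else k := by
  have ha : a ≠ [] := by rw [← List.length_pos_iff, ← hp]; exact hpl
  intro m hm
  rcases lt_or_ge m (e * p) with h | h
  · rw [if_pos h, List.getD_append _ _ _ _ (by rw [length_listPow, ← hp]; exact h),
      getD_listPow a e m ha (by rw [← hp]; exact h), hp]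
  · rw [if_neg (not_lt.mpr h), List.getD_append_right _ _ _ _ (by rw [length_listPow, ← hp]; exact h)]
    rw [length_listPow, ← hp]
    have hlt : m - e * p < p := by omega
    rw [List.getD_eq_getElem _ _ (by rw [List.length_replicate]; exact hlt),
      List.getElem_replicate]

/-- Property 4: if `α` and `β` are consecutive necklaces of `S_k(n,w↑)` in lexicographic
order and `α` is periodic, then `α` is a prefix of `ap(α)·ap(β)`, and `β` is aperiodic. -/
theorem periodic_necklace_prefix_of_ap_concat
    (n k w : ℕ) (hn : 1 < n) (hk : 1 < k) (hw : w < k * n)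
    (α β : List ℕ)
    (hα : IsStr k α ∧ α.length = n ∧ w ≤ α.sum ∧ IsNecklace α)
    (hβ : IsStr k β ∧ β.length = n ∧ w ≤ β.sum ∧ IsNecklace β)
    (hlt : α < β)
    (hconsec : ∀ γ : List ℕ, IsStr k γ → γ.length = n → w ≤ γ.sum → IsNecklace γ →
      ¬(α < γ ∧ γ < β))
    (hper : ¬ ListAperiodic α) :
    (∀ tα tβ : List ℕ, IsApOf tα α → IsApOf tβ β → α <+: (tα ++ tβ)) ∧
    ListAperiodic β := by
  obtain ⟨hαstr, hαlen, hαsum, hαneck⟩ := hα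
  obtain ⟨hβstr, hβlen, hβsum, hβneck⟩ := hβ
  have hnpos : 0 < n := by omega
  have hαne : α ≠ [] := by rw [← List.length_pos_iff]; omega
  have hβne : β ≠ [] := by rw [← List.length_pos_iff]; omega
  obtain ⟨a, ⟨⟨d, hd1, hαeq⟩, hamin⟩, haap⟩ := exists_ap_root α hαne
  obtain ⟨p, hp⟩ : ∃ p, p = a.length := ⟨_, rfl⟩
  have hpn : d * p = n := by
    have := congrArg List.length hαeq
    rw [hαlen, length_listPow, ← hp] at this
    omega
  have hppos : 0 < p := by
    rcases Nat.eq_zero_or_pos p with h | h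
    · exfalso; rw [h] at hpn; omega
    · exact h
  have ha_ne : a ≠ [] := by rw [← List.length_pos_iff, ← hp]; exact hppos
  have hd2 : 2 ≤ d := by
    by_contra hcon
    push_neg at hcon
    have hd1' : d = 1 := by omega
    rw [hd1', listPow_one] at hαeq
    refine hper ?_
    show IsApOf α α
    constructor
    · exact ⟨1, le_rfl, by rw [listPow_one]⟩
    · intro u m hm hum
      have := hamin u m hm hum
      have hlen' : α.length = a.length := by rw [hαeq]
      omega
  have hd1p : (d - 1) * p + p = n := by
    have : (d - 1) * p + p = ((d-1)+1)*p := by ring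
    rw [this, show d - 1 + 1 = d by omega, hpn]
  have hαD : ∀ m, m < n → α.getD m 0 = a.getD (m % p) 0 := by
    intro m hm
    rw [hαeq, getD_listPow a d m ha_ne (by rw [← hp, hpn]; exact hm), hp]
  have hsub : ∀ x ∈ a, x ∈ α := by
    intro x hx
    rw [hαeq]
    exact (prefix_listPow a d hd1).subset hx
  have haD : ∀ m, m < p → a.getD m 0 ≤ k := by
    intro m hm
    rw [List.getD_eq_getElem _ _ (by omega : m < a.length)]
    exact (hαstr _ (hsub _ (List.getElem_mem _))).2
  have hβD : ∀ m, m < n → β.getD m 0 ≤ k := by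
    intro m hm
    rw [List.getD_eq_getElem _ _ (by omega : m < β.length)]
    exact (hβstr _ (List.getElem_mem _)).2
  -- first diff of α and β
  obtain ⟨i0, hi0n, hagr, hdif⟩ := first_diff_of_lt α β (by rw [hαlen, hβlen]) hlt
  rw [hαlen] at hi0n
  -- least index of a below k
  have hzE : ∃ m, m < p ∧ a.getD m 0 < k := by
    by_contra hall
    push_neg at hall
    have hak' : ∀ m, m < n → α.getD m 0 = k := by
      intro m hm
      have h1 : m % p < p := Nat.mod_lt _ hppos
      rw [hαD m hm]
      exact le_antisymm (haD _ h1) (hall _ h1)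
    have h2 := hβD i0 hi0n
    rw [hak' i0 hi0n] at hdif
    omega
  classical
  obtain ⟨hzp, hzk⟩ := Nat.find_spec hzE
  set z := Nat.find hzE with hzdef
  have hzmin : ∀ m, m < z → a.getD m 0 = k := by
    intro m hm
    have := Nat.find_min hzE hm
    push_neg at this
    exact le_antisymm (haD m (by omega)) (this (by omega))
  have h0 : a.getD 0 0 < k := by
    have hle := head_le_of_le α (α.rotate z) (by omega) (by rw [List.length_rotate]; omega)
      (hαneck z)
    rw [← List.getD_eq_getElem α 0 (by omega), ← List.getD_eq_getElem (α.rotate z) 0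
      (by rw [List.length_rotate]; omega)] at hle
    rw [getD_rotate α z 0 (by omega), hαlen, Nat.zero_add, Nat.mod_eq_of_lt (by omega)] at hle
    rw [hαD 0 (by omega), Nat.zero_mod] at hle
    rw [hαD z (by omega), Nat.mod_eq_of_lt (by omega)] at hle
    omega
  -- the padded string γ0
  set γ0 := listPow a (d-1) ++ List.replicate p k with hγ0
  have hγlen : γ0.length = n := by
    rw [hγ0, List.length_append, length_listPow, List.length_replicate, ← hp, hd1p]
  have hγD := getD_pad a k (d-1) p n hp hppos hd1p
  have hγneck : IsNecklace γ0 :=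
    pad_necklace k a d (d-1) p n z hp hppos hd2 (by omega) hpn.symm
      (fun x hx => (hαstr x (hsub x hx)).2) haap (by rw [← hαeq]; exact hαneck)
      hzp hzk hzmin h0
  have hγstr : IsStr k γ0 := by
    intro x hx
    rw [hγ0, List.mem_append] at hx
    rcases hx with hx | hx
    · exact hαstr x (hsub x (mem_listPow a (d-1) x hx))
    · rw [List.eq_of_mem_replicate hx]
      exact ⟨by omega, le_rfl⟩
  have hγsum : w ≤ γ0.sum := by
    have h1 : γ0.sum = (d-1) * a.sum + p * k := by
      rw [hγ0, List.sum_append, sum_listPow, List.sum_replicate, smul_eq_mul]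
    have h2 : a.sum ≤ p * k := by
      have := List.sum_le_card_nsmul a k (fun x hx => (hαstr x (hsub x hx)).2)
      rwa [← hp, smul_eq_mul] at this
    have h3 : w ≤ d * a.sum := by rwa [hαeq, sum_listPow] at hαsum
    have h4 : d * a.sum = (d-1) * a.sum + a.sum := by
      conv_lhs => rw [show d = (d-1) + 1 by omega]
      ring
    omega
  have hαγ : α < γ0 := by
    refine lt_of_agree' α γ0 (z + (d-1)*p) (by omega) (by rw [hγlen]; omega) ?_ ?_
    · intro j hj
      rw [hαD j (by omega), hγD j (by omega)]
      rcases lt_or_ge j ((d-1)*p) with h1 | h1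
      · rw [if_pos h1]
      · rw [if_neg (not_lt.mpr h1)]
        have hj2 : j = (j - (d-1)*p) + (d-1)*p := by omega
        rw [hj2, Nat.add_mul_mod_self_right, Nat.mod_eq_of_lt (by omega)]
        exact hzmin _ (by omega)
    · rw [hαD _ (by omega), hγD _ (by omega), if_neg (by omega),
        Nat.add_mul_mod_self_right, Nat.mod_eq_of_lt (by omega)]
      exact hzk
  have hβγ : β ≤ γ0 := by
    by_contra hcon
    push_neg at hcon
    exact hconsec γ0 hγstr hγlen hγsum hγneck ⟨hαγ, hcon⟩
  -- the first difference is at least (d-1) * p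
  have hi0 : (d-1)*p ≤ i0 := by
    by_contra hcon
    push_neg at hcon
    have hγβ : γ0 < β := by
      refine lt_of_agree' γ0 β i0 (by rw [hγlen]; omega) (by omega) ?_ ?_
      · intro j hj
        rw [hγD j (by omega), if_pos (by omega), ← hαD j (by omega)]
        exact hagr j hj
      · rw [hγD i0 (by omega), if_pos (by omega), ← hαD i0 (by omega)]
        exact hdif
    exact absurd (lt_of_le_of_lt hβγ hγβ) (lt_irrefl _)
  -- β is aperiodic
  have hβap : ListAperiodic β := by
    by_contra hbp
    obtain ⟨t, ⟨⟨e', he1, hβeq⟩, htmin⟩, htap⟩ := exists_ap_root β hβne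
    obtain ⟨q, hq⟩ : ∃ q, q = t.length := ⟨_, rfl⟩
    have hqe : e' * q = n := by
      have := congrArg List.length hβeq
      rw [hβlen, length_listPow, ← hq] at this
      omega
    have hq0 : 0 < q := by
      rcases Nat.eq_zero_or_pos q with h | h
      · exfalso; rw [h] at hqe; omega
      · exact h
    have hqn : q < n := by
      rcases lt_or_ge q n with h | h
      · exact h
      · exfalso
        have hpre : t <+: β := hβeq ▸ prefix_listPow t e' he1
        have hqn' : q = n := le_antisymm (by rw [hq, ← hβlen]; exact hpre.length_le) h
        have he'1 : e' = 1 := by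
          have h1 : e' * q = 1 * q := by rw [one_mul, hqe, hqn']
          exact Nat.eq_of_mul_eq_mul_right hq0 h1
        rw [he'1, listPow_one] at hβeq
        refine hbp ?_
        show IsApOf β β
        constructor
        · exact ⟨1, le_rfl, by rw [listPow_one]⟩
        · intro u m hm hum
          have := htmin u m hm hum
          have : t.length = β.length := by rw [← hq, hqn', hβlen]
          omega
    have he'2 : 2 ≤ e' := by
      by_contra hcon
      push_neg at hcon
      have he'1 : e' = 1 := by omega
      rw [he'1, one_mul] at hqe
      omega
    have h2q : 2 * q ≤ n := by
      calc 2 * q ≤ e' * q := Nat.mul_le_mul_right q he'2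
        _ = n := hqe
    have hpd1 : p ≤ (d-1)*p := by
      calc p = 1 * p := by ring
        _ ≤ (d-1)*p := Nat.mul_le_mul_right p (by omega)
    have hqi0 : q ≤ i0 := by omega
    have hβper : ∀ m, m + q < n → β.getD m 0 = β.getD (m + q) 0 := by
      intro m hm
      rw [hβeq, getD_listPow t e' m (by rw [← List.length_pos_iff, ← hq]; exact hq0)
          (by rw [← hq, hqe]; omega),
        getD_listPow t e' (m + q) (by rw [← List.length_pos_iff, ← hq]; exact hq0)
          (by rw [← hq, hqe]; exact hm), ← hq, Nat.add_mod_right]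
    have hρ : α.rotate q < α := by
      refine lt_of_agree' (α.rotate q) α (i0 - q) (by rw [List.length_rotate]; omega)
        (by omega) ?_ ?_
      · intro j hj
        rw [getD_rotate α q j (by omega), hαlen, Nat.mod_eq_of_lt (by omega : j + q < n)]
        rw [hagr (j + q) (by omega), ← hβper j (by omega), ← hagr j (by omega)]
      · rw [getD_rotate α q (i0 - q) (by omega), hαlen,
          show i0 - q + q = i0 by omega, Nat.mod_eq_of_lt (by omega)]
        rw [hagr (i0 - q) (by omega), hβper (i0 - q) (by omega : i0 - q + q < n),
          show i0 - q + q = i0 by omega]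
        exact hdif
    exact absurd (hαneck q) (not_le.mpr hρ)
  refine ⟨?_, hβap⟩
  -- the prefix property
  intro tα tβ h1 h2
  have htα : tα = a := by
    obtain ⟨⟨j1, hj1, hαj1⟩, hmin1⟩ := h1
    have hlen1 : tα.length = a.length := le_antisymm (hmin1 a d hd1 hαeq) (hamin tα j1 hj1 hαj1)
    have hpre1 : tα <+: α := hαj1 ▸ prefix_listPow tα j1 hj1
    have hpre2 : a <+: α := hαeq ▸ prefix_listPow a d hd1
    rw [List.prefix_iff_eq_take] at hpre1 hpre2
    rw [hpre1, hlen1, ← hpre2]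
  have htβ : tβ = β := by
    obtain ⟨⟨j2, hj2, hβj2⟩, hmin2⟩ := h2
    have hge : β.length ≤ tβ.length := hβap.2 tβ j2 hj2 hβj2
    have hpre : tβ <+: β := hβj2 ▸ prefix_listPow tβ j2 hj2
    have hlen : tβ.length = β.length := le_antisymm hpre.length_le hge
    rw [List.prefix_iff_eq_take] at hpre
    rw [hpre, hlen, List.take_length]
  rw [htα, htβ]
  have hβtake : β.take ((d-1)*p) = α.take ((d-1)*p) := by
    apply List.ext_getElem
    · rw [List.length_take, List.length_take, hαlen, hβlen]
    · intro m h1' h2'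
      have hm : m < (d-1)*p := by
        rw [List.length_take] at h1'
        omega
      rw [List.getElem_take, List.getElem_take]
      have := hagr m (by omega)
      rw [List.getD_eq_getElem _ _ (by omega : m < α.length),
        List.getD_eq_getElem _ _ (by omega : m < β.length)] at this
      exact this.symm
  have hαtake : α.take ((d-1)*p) = listPow a (d-1) := by
    rw [hαeq, hp]
    exact take_listPow a d (d-1) (by omega)
  have hsplit : a ++ β = α ++ β.drop ((d-1)*p) := by
    conv_lhs => rw [← List.take_append_drop ((d-1)*p) β]
    rw [← List.append_assoc, hβtake, hαtake]
    congr 1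
    rw [hαeq]
    conv_rhs => rw [show d = 1 + (d-1) by omega, listPow_add, listPow_one]
  rw [hsplit]
  exact List.prefix_append _ _
end

section
/- Let α = a₁a₂⋯a_n be a necklace over the alphabet {1,…,k}, let 1 ≤ i ≤ j ≤ n, and let x be a symbol with x > a_j. Then the string a_i a_{i+1} ⋯ a_{j−1} x (of length j−i+1) is lexicographically larger than α. -/
private lemma lex_key : ∀ (t s u : List ℕ) (b x : ℕ),
    s ≤ t ++ b :: u → b < x → t.length < s.length → s < t ++ [x] := by
  intro t
  induction t with
  | nil =>
    intro s u b x hle hbx hlen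
    match s, hlen with
    | a :: s', _ =>
      rw [List.nil_append] at hle
      show List.Lex (· < ·) (a :: s') [x]
      rcases lt_or_eq_of_le hle with h | h
      · have h' : List.Lex (· < ·) (a :: s') (b :: u) := h
        cases h' with
        | cons h'' => exact List.Lex.rel hbx
        | rel hab => exact List.Lex.rel (hab.trans hbx)
      · cases h; exact List.Lex.rel hbx
  | cons c t' ih =>
    intro s u b x hle hbx hlen
    match s, hlen with
    | a :: s', hlen =>
      rw [List.cons_append] at hle ⊢
      show List.Lex (· < ·) (a :: s') (c :: (t' ++ [x]))
      rcases lt_or_eq_of_le hle with h | h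
      · have h' : List.Lex (· < ·) (a :: s') (c :: (t' ++ b :: u)) := h
        cases h' with
        | rel hab => exact List.Lex.rel hab
        | cons h'' =>
          exact List.Lex.cons (ih s' u b x (le_of_lt h'') hbx
            (by simpa using Nat.lt_of_succ_lt_succ hlen))
      · injection h with h1 h2
        subst h1
        exact List.Lex.cons (ih s' u b x (le_of_eq h2) hbx
          (by simpa using Nat.lt_of_succ_lt_succ hlen))

/-- Property 5: if `α = a₁a₂⋯a_n` is a necklace, `1 ≤ i ≤ j ≤ n`, and `x > a_j`, then the
string `a_i a_{i+1} ⋯ a_{j-1} x` is lexicographically larger than `α`.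
(Here `a_j` is accessed 0-based as `α.getD (j-1) 0`, and the substring
`a_i ⋯ a_{j-1}` is `(α.drop (i-1)).take (j-i)`.) -/
theorem necklace_substring_larger
    (n k : ℕ) (hn : 1 ≤ n) (α : List ℕ)
    (hstr : IsStr k α) (hlen : α.length = n) (hneck : IsNecklace α)
    (i j x : ℕ) (hi : 1 ≤ i) (hij : i ≤ j) (hjn : j ≤ n)
    (hx : α.getD (j - 1) 0 < x) :
    α < (α.drop (i - 1)).take (j - i) ++ [x] := by
  have hj1 : j - 1 < α.length := by omega
  have hgetD : α.getD (j - 1) 0 = α[j - 1] := List.getD_eq_getElem α 0 hj1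
  have hrot : α.rotate (i - 1) = α.drop (i - 1) ++ α.take (i - 1) :=
    List.rotate_eq_drop_append_take (by omega)
  have hdropsplit : α.drop (i - 1) =
      (α.drop (i - 1)).take (j - i) ++ (α.drop (i - 1)).drop (j - i) :=
    (List.take_append_drop _ _).symm
  have hdd : (α.drop (i - 1)).drop (j - i) = α.drop (j - 1) := by
    rw [List.drop_drop]; congr 1; omega
  have hdropj : α.drop (j - 1) = α[j - 1] :: α.drop ((j - 1) + 1) :=
    List.drop_eq_getElem_cons hj1
  have hle : α ≤ ((α.drop (i - 1)).take (j - i)) ++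
      (α[j - 1] :: (α.drop ((j - 1) + 1) ++ α.take (i - 1))) := by
    have := hneck (i - 1)
    rw [hrot] at this
    calc α ≤ α.drop (i - 1) ++ α.take (i - 1) := this
      _ = _ := by
        conv_lhs => rw [hdropsplit, hdd, hdropj]
        rw [List.append_assoc, List.cons_append]
  have hlength : ((α.drop (i - 1)).take (j - i)).length < α.length := by
    simp only [List.length_take, List.length_drop]
    omega
  exact lex_key _ α _ _ x hle (hgetD ▸ hx) hlength
end

section
/- Let n, k > 1 and k ≤ w < kn, let α₁ be the lexicographically smallest necklace in S_k(n,w↑), and let G_k(n,w↑) denote the concatenation ap(α₁)ap(α₂)⋯ap(α_m), where α₁ < α₂ < ⋯ < α_m are all necklaces in S_k(n,w↑) listed in increasing lexicographic order. Then α₁ is a prefix of G_k(n,w↑) and k^n is a suffix of G_k(n,w↑). -/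
/-- `β` is a necklace in `S_k(n, w↑)` (weight at least `w`). -/
def IsNeckInW (k n w : ℕ) (β : List ℕ) : Prop :=
  IsStr k β ∧ β.length = n ∧ w ≤ β.sum ∧ IsNecklace β

namespace GD
open List

lemma listPow_nil (j : ℕ) : listPow [] j = [] := by
  induction j with
  | zero => rfl
  | succ j ih => simp [listPow, ih]

lemma listPow_length (t : List ℕ) (j : ℕ) : (listPow t j).length = j * t.length := by
  induction j with
  | zero => simp [listPow]
  | succ j ih => simp [listPow, ih]; ring

lemma listPow_sum (t : List ℕ) (j : ℕ) : (listPow t j).sum = j * t.sum := by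
  induction j with
  | zero => simp [listPow]
  | succ j ih => simp [listPow, ih]; ring

lemma listPow_count (t : List ℕ) (j x : ℕ) : (listPow t j).count x = j * t.count x := by
  induction j with
  | zero => simp [listPow]
  | succ j ih => simp [listPow, List.count_append, ih]; ring

lemma listPow_one (t : List ℕ) : listPow t 1 = t := by simp [listPow]

lemma listPow_replicate (p x j : ℕ) : listPow (replicate p x) j = replicate (j * p) x := by
  induction j with
  | zero => simp [listPow]
  | succ j ih => rw [listPow, ih, ← replicate_add]; congr 1; ring

lemma lex_append_left {x y : List ℕ} (p : List ℕ) (h : x < y) : p ++ x < p ++ y := by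
  induction p with
  | nil => simpa using h
  | cons a p ih => exact List.Lex.cons ih

lemma lex_append_left_le {x y : List ℕ} (p : List ℕ) (h : x ≤ y) : p ++ x ≤ p ++ y := by
  rcases lt_or_eq_of_le h with h | rfl
  · exact le_of_lt (lex_append_left p h)
  · exact le_rfl

lemma le_rep (k : ℕ) : ∀ (t : List ℕ), (∀ e ∈ t, e ≤ k) → t ≤ replicate t.length k := by
  intro t
  induction t with
  | nil => intro _; simp
  | cons b t' ih =>
    intro hb
    rw [length_cons, replicate_succ]
    rcases eq_or_lt_of_le (hb b (mem_cons_self)) with rfl | hlt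
    · exact List.cons_le_cons _ (ih fun e he => hb e (mem_cons_of_mem _ he))
    · exact le_of_lt (List.Lex.rel hlt)

lemma low2 : ∀ (m : ℕ) (x : List ℕ), (∀ e ∈ x, 1 ≤ e) → x.length = m + 1 →
    x ≠ replicate (m+1) 1 → replicate m 1 ++ [2] ≤ x := by
  intro m
  induction m with
  | zero =>
    intro x hx hlen hne
    obtain ⟨e, rfl⟩ := List.length_eq_one_iff.mp hlen
    have he : 1 ≤ e := hx e (by simp)
    have he2 : 2 ≤ e := by
      rcases eq_or_lt_of_le he with rfl | h
      · exact absurd (by simp [replicate]) hne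
      · omega
    rcases eq_or_lt_of_le he2 with rfl | h
    · simp
    · simpa using le_of_lt (List.Lex.rel h : (2:ℕ) :: [] < e :: [])
  | succ m ih =>
    intro x hx hlen hne
    cases x with
    | nil => simp at hlen
    | cons b x' =>
      have hb : 1 ≤ b := hx b (mem_cons_self)
      rcases eq_or_lt_of_le hb with rfl | hb2
      · have hx' : x' ≠ replicate (m+1) 1 := by
          intro h; apply hne; rw [replicate_succ, h]
        have := ih x' (fun e he => hx e (mem_cons_of_mem _ he)) (by simpa using hlen) hx'
        rw [replicate_succ, cons_append]
        exact List.cons_le_cons _ this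
      · rw [replicate_succ, cons_append]
        exact le_of_lt (List.Lex.rel hb2)

lemma isNecklace_replicate (m x : ℕ) : IsNecklace (replicate m x) := by
  intro i; rw [rotate_replicate]

lemma isNecklace_of (s : List ℕ)
    (h : ∀ i, 0 < i → i < s.length → s ≤ s.drop i ++ s.take i) : IsNecklace s := by
  intro i
  rcases eq_or_ne s [] with rfl | hs
  · simp
  · have hl : 0 < s.length := List.length_pos_iff.mpr hs
    rw [← List.rotate_mod]
    have hm : i % s.length < s.length := Nat.mod_lt _ hl
    rw [List.rotate_eq_drop_append_take hm.le]
    rcases Nat.eq_zero_or_pos (i % s.length) with h0 | h0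
    · simp [h0]
    · exact h _ h0 hm

lemma N1 {x y : ℕ} (hxy : x ≤ y) (A m : ℕ) :
    IsNecklace (replicate A x ++ replicate m y) := by
  rcases eq_or_lt_of_le hxy with rfl | hxy
  · rw [← replicate_add]; exact isNecklace_replicate _ _
  rcases Nat.eq_zero_or_pos A with rfl | hA
  · simpa using isNecklace_replicate m y
  rcases Nat.eq_zero_or_pos m with rfl | hm
  · simpa using isNecklace_replicate A x
  apply isNecklace_of
  intro i hi hil
  rw [length_append, length_replicate, length_replicate] at hil
  rcases le_or_gt i A with hiA | hiA
  · have e2 : (replicate A x ++ replicate m y).drop i ++ (replicate A x ++ replicate m y).take i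
        = replicate (A - i) x ++ (replicate m y ++ replicate i x) := by
      rw [drop_append, take_append, drop_replicate,
        take_replicate, length_replicate, Nat.sub_eq_zero_of_le hiA]
      simp [min_eq_left hiA, append_assoc]
    have e1 : replicate A x ++ replicate m y
        = replicate (A - i) x ++ (replicate i x ++ replicate m y) := by
      rw [← append_assoc, ← replicate_add]
      congr 2
      omega
    rw [e2]
    conv_lhs => rw [e1]
    apply lex_append_left_le
    obtain ⟨i', rfl⟩ : ∃ i', i = i' + 1 := ⟨i - 1, by omega⟩
    obtain ⟨m', rfl⟩ : ∃ m', m = m' + 1 := ⟨m - 1, by omega⟩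
    rw [replicate_succ, replicate_succ (a := y), cons_append, cons_append]
    exact le_of_lt (List.Lex.rel hxy)
  · have e2 : (replicate A x ++ replicate m y).drop i
        = replicate (m - (i - A)) y := by
      rw [drop_append, drop_replicate, Nat.sub_eq_zero_of_le hiA.le,
        length_replicate]
      simp
    obtain ⟨f, hf⟩ : ∃ f, m - (i - A) = f + 1 := ⟨m - (i - A) - 1, by omega⟩
    obtain ⟨A', rfl⟩ : ∃ A', A = A' + 1 := ⟨A - 1, by omega⟩
    rw [e2, hf, replicate_succ, replicate_succ, cons_append, cons_append]
    exact le_of_lt (List.Lex.rel hxy)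

lemma N2 {d y : ℕ} (h2 : 2 ≤ d) (hdy : d ≤ y) (a m : ℕ) :
    IsNecklace (replicate a 1 ++ d :: replicate m y) := by
  by_cases hcase : a = 0 ∧ d = y
  · obtain ⟨rfl, rfl⟩ := hcase
    simpa [← replicate_succ] using isNecklace_replicate (m+1) d
  apply isNecklace_of
  intro i hi hil
  have hlen : (replicate a 1 ++ d :: replicate m y).length = a + 1 + m := by
    simp; omega
  rw [hlen] at hil
  rcases le_or_gt i a with hiA | hiA
  · have e2 : (replicate a 1 ++ d :: replicate m y).drop i
          ++ (replicate a 1 ++ d :: replicate m y).take i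
        = replicate (a - i) 1 ++ ((d :: replicate m y) ++ replicate i 1) := by
      rw [drop_append, take_append, drop_replicate,
        take_replicate, length_replicate, Nat.sub_eq_zero_of_le hiA]
      simp [min_eq_left hiA, append_assoc]
    have e1 : replicate a 1 ++ d :: replicate m y
        = replicate (a - i) 1 ++ (replicate i 1 ++ d :: replicate m y) := by
      rw [← append_assoc, ← replicate_add]
      congr 2
      omega
    rw [e2]
    conv_lhs => rw [e1]
    apply lex_append_left_le
    obtain ⟨i', rfl⟩ : ∃ i', i = i' + 1 := ⟨i - 1, by omega⟩
    rw [replicate_succ, cons_append]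
    exact le_of_lt (List.Lex.rel (by omega))
  · have e2 : (replicate a 1 ++ d :: replicate m y).drop i
        = replicate (m - (i - a - 1)) y := by
      rw [drop_append, drop_replicate, Nat.sub_eq_zero_of_le hiA.le,
        length_replicate]
      obtain ⟨e, he⟩ : ∃ e, i - a = e + 1 := ⟨i - a - 1, by omega⟩
      rw [he]
      simp only [replicate_zero, nil_append, drop_succ_cons, drop_replicate]
      congr 1 <;> omega
    obtain ⟨f, hf⟩ : ∃ f, m - (i - a - 1) = f + 1 := ⟨m - (i - a - 1) - 1, by omega⟩
    rw [e2, hf, replicate_succ]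
    rcases Nat.eq_zero_or_pos a with rfl | ha
    · have hdy' : d < y := by
        rcases eq_or_lt_of_le hdy with rfl | h
        · exact absurd ⟨rfl, rfl⟩ hcase
        · exact h
      simp only [replicate_zero, nil_append]
      exact le_of_lt (List.Lex.rel hdy')
    · obtain ⟨a', rfl⟩ : ∃ a', a = a' + 1 := ⟨a - 1, by omega⟩
      rw [replicate_succ, cons_append]
      exact le_of_lt (List.Lex.rel (by omega))

end GD

namespace GD
open List

lemma sorted_head {L : List (List ℕ)} {y : List ℕ} (hp : L.Pairwise (· < ·)) (hy : y ∈ L)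
    (hlb : ∀ x ∈ L, y ≤ x) : ∃ M, L = y :: M := by
  cases L with
  | nil => cases hy
  | cons h M =>
    rcases List.mem_cons.mp hy with rfl | hyM
    · exact ⟨M, rfl⟩
    · have h1 : h < y := (List.pairwise_cons.mp hp).1 y hyM
      have h2 : y ≤ h := hlb h (mem_cons_self)
      exact absurd (lt_of_le_of_lt h2 h1) (lt_irrefl _)

lemma sorted_last {L : List (List ℕ)} {y : List ℕ} (hp : L.Pairwise (· < ·)) (hy : y ∈ L)
    (hub : ∀ x ∈ L, x ≤ y) : ∃ M, L = M ++ [y] := by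
  rcases List.eq_nil_or_concat L with rfl | ⟨M, b, rfl⟩
  · cases hy
  · rw [List.concat_eq_append] at *
    refine ⟨M, ?_⟩
    rcases List.mem_append.mp hy with hyM | hyb
    · have h1 : y < b := (List.pairwise_append.mp hp).2.2 y hyM b (by simp)
      have h2 : b ≤ y := hub b (by simp)
      exact absurd (lt_of_le_of_lt h2 h1) (lt_irrefl _)
    · simp at hyb; rw [hyb]

lemma ap_count_one {u s : List ℕ} (h : IsApOf u s) {x : ℕ} (hc : s.count x = 1) : u = s := by
  obtain ⟨⟨j, hj, hs⟩, -⟩ := h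
  have hcnt : j * u.count x = 1 := by rw [← listPow_count, ← hs, hc]
  have hj1 : j = 1 := Nat.dvd_one.mp ⟨u.count x, hcnt.symm⟩
  rw [hs, hj1, listPow_one]

lemma ap_replicate {u : List ℕ} {n x : ℕ} (hn : 0 < n) (h : IsApOf u (replicate n x)) :
    u = [x] := by
  obtain ⟨⟨j, hj, hs⟩, hmin⟩ := h
  have hrep : (replicate n x : List ℕ) = listPow [x] n := by
    rw [show ([x] : List ℕ) = replicate 1 x by simp, listPow_replicate, mul_one]
  have hlen : u.length ≤ 1 := by simpa using hmin [x] n hn hrep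
  have hune : u ≠ [] := by
    intro h0
    rw [h0, listPow_nil] at hs
    simp at hs
    omega
  obtain ⟨y, rfl⟩ : ∃ y, u = [y] := by
    cases u with
    | nil => exact absurd rfl hune
    | cons y u' =>
      refine ⟨y, ?_⟩
      have : u'.length = 0 := by simpa using hlen
      rw [List.length_eq_zero_iff.mp this]
  have hs2 : replicate n x = replicate j y := by
    rw [hs, show ([y] : List ℕ) = replicate 1 y by simp, listPow_replicate, mul_one]
  have hx : x ∈ replicate j y := by rw [← hs2]; exact mem_replicate.mpr ⟨by omega, rfl⟩
  rw [eq_of_mem_replicate hx]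

lemma dec : ∀ (x : List ℕ), (∀ e ∈ x, 1 ≤ e) → x ≠ replicate x.length 1 →
    ∃ a c r, x = replicate a 1 ++ c :: r ∧ 2 ≤ c ∧ x.length = a + 1 + r.length := by
  intro x
  induction x with
  | nil => intro _ hne; simp at hne
  | cons b x' ih =>
    intro hb hne
    rcases eq_or_lt_of_le (hb b (mem_cons_self)) with rfl | hb2
    · have hx' : x' ≠ replicate x'.length 1 := by
        intro h
        apply hne
        rw [length_cons, replicate_succ]
        exact congrArg _ h
      obtain ⟨a, c, r, h1, h2, h3⟩ := ih (fun e he => hb e (mem_cons_of_mem _ he)) hx'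
      exact ⟨a + 1, c, r, by rw [replicate_succ, cons_append, h1], h2, by simp [h3]; omega⟩
    · exact ⟨0, b, x', by simp, hb2, by simp; omega⟩

lemma high {k n : ℕ} {x : List ℕ} (hstr : ∀ e ∈ x, e ≤ k) (hlen : x.length = n)
    (hneck : IsNecklace x) (hne : x ≠ replicate n k) (hn : 0 < n) :
    x ≤ (k-1) :: replicate (n-1) k := by
  have hex : ∃ e ∈ x, e ≠ k := by
    by_contra h
    push_neg at h
    exact hne (List.eq_replicate_iff.mpr ⟨hlen, h⟩)
  obtain ⟨e, he, hek⟩ := hex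
  have hek' : e ≤ k - 1 := by have := hstr e he; omega
  obtain ⟨u, v, rfl⟩ := List.append_of_mem he
  have hrot : (u ++ e :: v) ≤ e :: (v ++ u) := by
    have h1 := hneck u.length
    rw [List.rotate_eq_drop_append_take (by simp)] at h1
    simpa [List.drop_left, List.take_left] using h1
  have hhead : ∃ h t, u ++ e :: v = h :: t ∧ h ≤ k - 1 := by
    cases u with
    | nil => exact ⟨e, v, rfl, hek'⟩
    | cons u0 u' =>
      refine ⟨u0, u' ++ e :: v, rfl, ?_⟩
      have : u0 ≤ e := by
        rcases lt_or_eq_of_le hrot with h | h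
        · exact List.head_le_of_lt h
        · rw [cons_append] at h
          have := congrArg (fun l => l.headI) h
          simp at this
          omega
      omega
  obtain ⟨h, t, heq, hh⟩ := hhead
  rw [heq]
  rcases lt_or_eq_of_le hh with h1 | rfl
  · exact le_of_lt (List.Lex.rel h1)
  · apply List.cons_le_cons
    have h2 : t ≤ replicate t.length k :=
      le_rep k t (fun a ha => hstr a (by rw [heq]; exact mem_cons_of_mem _ ha))
    have h3 : t.length = n - 1 := by
      have := hlen; rw [heq] at this; simp at this; omega
    rwa [h3] at h2

end GD

namespace GD
open List

lemma key {n k w : ℕ} (hn : 1 < n) (hk : 1 < k) (hw2 : w < k * n)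
    (α₁ : List ℕ) (hα₁ : IsNeckInW k n w α₁)
    (hmin : ∀ β : List ℕ, IsNeckInW k n w β → α₁ ≤ β)
    {t : List ℕ} {j : ℕ} (hj : 2 ≤ j) (ht : α₁ = listPow t j) :
    α₁ = replicate n 1 := by
  obtain ⟨j2, rfl⟩ : ∃ j2, j = j2 + 2 := ⟨j - 2, by omega⟩
  obtain ⟨hstr, hlen, hwsum, hneck⟩ := hα₁
  by_contra hne
  obtain ⟨a, c, r, hdec, hc2, hlen2⟩ :=
    dec α₁ (fun e he => (hstr e he).1) (by rw [hlen]; exact hne)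
  set m := r.length with hm
  have hnm : n = a + 1 + m := by omega
  have hck : c ≤ k :=
    (hstr c (by rw [hdec]; exact mem_append_right _ (mem_cons_self))).2
  have hrk : ∀ e ∈ r, e ≤ k :=
    fun e he => (hstr e (by rw [hdec]; exact mem_append_right _ (mem_cons_of_mem _ he))).2
  have hrsum : r.sum ≤ m * k := by
    have := List.sum_le_card_nsmul r k hrk
    simpa [smul_eq_mul, hm] using this
  have hsum1 : α₁.sum = a + c + r.sum := by
    rw [hdec]; simp [List.sum_append, List.sum_replicate]; omega
  set β := replicate a 1 ++ (c-1) :: replicate m k with hβ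
  have hβlen : β.length = n := by simp [hβ]; omega
  have hβstr : IsStr k β := by
    intro e he
    rw [hβ] at he
    rcases mem_append.mp he with h | h
    · have := eq_of_mem_replicate h; omega
    · rcases mem_cons.mp h with rfl | h
      · omega
      · have := eq_of_mem_replicate h; omega
  have hβsum : β.sum = a + (c-1) + m * k := by
    rw [hβ]; simp [List.sum_append, List.sum_replicate, smul_eq_mul]; omega
  have hwβ : w ≤ β.sum := by
    rw [hβsum]
    rcases le_or_gt α₁.sum w with hcase | hcase
    · -- equality case : w = α₁.sum, use periodicity
      have heq : α₁.sum = w := le_antisymm hcase hwsum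
      set p := t.length with hp
      have hp0 : t ≠ [] := by
        intro h0
        rw [h0, listPow_nil] at ht
        rw [ht] at hlen
        simp at hlen
        omega
      have hp1 : 0 < p := List.length_pos_iff.mpr hp0
      have hnjp : n = (j2 + 2) * p := by rw [← hlen, ht, listPow_length]
      have htpre : α₁.take p = t := by
        have h1 : α₁ = t ++ listPow t (j2 + 1) := ht
        rw [h1, hp, List.take_left]
      have hap : a < p := by
        by_contra hcon
        push_neg at hcon
        apply hne
        have ht1 : t = replicate p 1 := by
          rw [← htpre, hdec, take_append, length_replicate,
            take_replicate, Nat.sub_eq_zero_of_le hcon, min_eq_left hcon]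
          simp
        rw [ht, ht1, listPow_replicate, ← hnjp]
      set q := p - a - 1 with hq
      have hpq : p = a + 1 + q := by omega
      have hpn : p ≤ n := by rw [hnjp]; exact Nat.le_mul_of_pos_left p (by omega)
      have hqm : q ≤ m := by omega
      have htq : t = replicate a 1 ++ c :: r.take q := by
        rw [← htpre, hdec, take_append, length_replicate,
          take_replicate, min_eq_right (by omega : a ≤ p),
          show p - a = q + 1 by omega, take_succ_cons]
      have hσ : t.sum = a + c + (r.take q).sum := by
        rw [htq]; simp [List.sum_append, List.sum_replicate]; omega
      have hSq : (r.take q).sum ≤ q * k := by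
        have hsub : ∀ e ∈ r.take q, e ≤ k := fun e he => hrk e (List.take_subset _ _ he)
        have h1 := List.sum_le_card_nsmul _ k hsub
        have h2 : (r.take q).length = q := by rw [List.length_take]; omega
        rw [h2] at h1
        simpa [smul_eq_mul] using h1
      have hwj : w = (j2 + 2) * t.sum := by rw [← heq, ht, listPow_sum]
      have hσpk : t.sum + 1 ≤ p * k := by
        have ha1 : a ≤ a * k := Nat.le_mul_of_pos_right a (by omega)
        have hle : t.sum ≤ p * k :=
          calc t.sum = a + c + (r.take q).sum := hσ
            _ ≤ a * k + k + q * k := by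
                exact add_le_add (add_le_add ha1 hck) hSq
            _ = p * k := by rw [hpq]; ring
        rcases lt_or_eq_of_le hle with h | h
        · omega
        · exfalso
          have hwkn : w = k * n := by rw [hwj, h, hnjp]; ring
          rw [hwkn] at hw2
          exact lt_irrefl _ hw2
      have hm2 : ∃ P, P = (j2 + 1) * p ∧ m = q + P := by
        refine ⟨(j2 + 1) * p, rfl, ?_⟩
        have hexp : (j2 + 2) * p = (a + 1 + q) + (j2 + 1) * p := by
          rw [← hpq]; ring
        have hn2 : n = (a + 1 + q) + (j2 + 1) * p := by rw [hnjp, hexp]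
        omega
      obtain ⟨P, hP, hm2⟩ := hm2
      have h8 : m * k = q * k + (j2 + 1) * (p * k) := by rw [hm2, hP]; ring
      have h5' : (j2 + 1) * t.sum + (j2 + 1) ≤ (j2 + 1) * (p * k) := by
        calc (j2 + 1) * t.sum + (j2 + 1) = (j2 + 1) * (t.sum + 1) := by ring
          _ ≤ (j2 + 1) * (p * k) := Nat.mul_le_mul_left _ hσpk
      have hw' : w = t.sum + (j2 + 1) * t.sum := by rw [hwj]; ring
      rw [hw', h8]
      generalize hX : (j2 + 1) * t.sum = X at h5' ⊢
      generalize hY : (j2 + 1) * (p * k) = Y at h5' ⊢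
      generalize hZ : q * k = Z at hSq ⊢
      omega
    · -- strict case
      rw [hsum1] at hcase
      generalize hM : m * k = M at hrsum ⊢
      omega
  have hβneck : IsNecklace β := by
    rcases eq_or_lt_of_le hc2 with hcc | hcc
    · have hβ2 : β = replicate (a+1) 1 ++ replicate m k := by
        rw [hβ, show replicate (a+1) 1 = replicate a 1 ++ [1] from replicate_succ', append_assoc, ← hcc]
        simp
      rw [hβ2]
      exact N1 (by omega) _ _
    · exact N2 (by omega) (by omega) a m
  have hβW : IsNeckInW k n w β := ⟨hβstr, hβlen, hwβ, hβneck⟩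
  have h1 : α₁ ≤ β := hmin β hβW
  have h2 : β < α₁ := by
    rw [hβ, hdec]
    exact lex_append_left _ (List.Lex.rel (by omega))
  exact absurd (lt_of_le_of_lt h1 h2) (lt_irrefl _)

end GD


open List

/-- For `n, k > 1` and `k ≤ w < kn`, the bounded-weight Granddaddy sequence
`G_k(n,w↑) = ap(α₁)ap(α₂)⋯ap(α_m)` — where `L = [α₁ < α₂ < ⋯ < α_m]` lists all
necklaces of `S_k(n,w↑)` in increasing lexicographic order — has `α₁` (the smallest
necklace) as a prefix and `k^n` as a suffix. -/
theorem granddaddy_bounded_weight_prefix_suffix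
    (n k w : ℕ) (hn : 1 < n) (hk : 1 < k) (hw1 : k ≤ w) (hw2 : w < k * n)
    (α₁ : List ℕ) (hα₁ : IsNeckInW k n w α₁)
    (hα₁min : ∀ β : List ℕ, IsNeckInW k n w β → α₁ ≤ β)
    (L : List (List ℕ)) (hsort : L.Chain' (· < ·))
    (hmem : ∀ β : List ℕ, β ∈ L ↔ IsNeckInW k n w β)
    (ap : List ℕ → List ℕ) (hap : ∀ β ∈ L, IsApOf (ap β) β) :
    α₁ <+: (L.map ap).flatten ∧ List.replicate n k <:+ (L.map ap).flatten := by
  classical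
  have hpair : L.Pairwise (· < ·) := List.isChain_iff_pairwise.mp hsort
  have hα₁L : α₁ ∈ L := (hmem α₁).mpr hα₁
  obtain ⟨L', hL'⟩ := GD.sorted_head hpair hα₁L (fun x hx => hα₁min x ((hmem x).mp hx))
  constructor
  · -- prefix
    obtain ⟨⟨j, hj1, hjeq⟩, hjmin⟩ := hap α₁ hα₁L
    rcases eq_or_lt_of_le hj1 with hj | hj2
    · subst hj
      rw [GD.listPow_one] at hjeq
      have heq : α₁ = ap α₁ := hjeq
      rw [hL', List.map_cons, List.flatten_cons]
      nth_rewrite 1 [heq]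
      exact List.prefix_append _ _
    · have hrep : α₁ = replicate n 1 := GD.key hn hk hw2 α₁ hα₁ hα₁min hj2 hjeq
      have hap1 : ap α₁ = [1] :=
        GD.ap_replicate (show 0 < n by omega) (by rw [← hrep]; exact hap α₁ hα₁L)
      have hw_n : w ≤ n := by
        have := hα₁.2.2.1
        rw [hrep] at this
        simpa [List.sum_replicate] using this
      have hα₂W : IsNeckInW k n w (replicate (n-1) 1 ++ [2]) := by
        refine ⟨?_, ?_, ?_, ?_⟩
        · intro e he
          rcases mem_append.mp he with h | h
          · have := eq_of_mem_replicate h; omega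
          · simp at h; omega
        · simp; omega
        · simp [List.sum_replicate]; omega
        · have h := GD.N2 (le_refl 2) (by omega : 2 ≤ k) (n-1) 0
          simpa using h
      have hα₂L : (replicate (n-1) 1 ++ [2]) ∈ L := (hmem _).mpr hα₂W
      have hα₂L' : (replicate (n-1) 1 ++ [2]) ∈ L' := by
        rw [hL'] at hα₂L
        rcases List.mem_cons.mp hα₂L with h | h
        · exfalso
          have := congrArg List.sum h
          rw [hrep] at this
          simp [List.sum_replicate] at this
          omega
        · exact h
      have hpair' : L'.Pairwise (· < ·) := by
        rw [hL'] at hpair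
        exact (List.pairwise_cons.mp hpair).2
      have hlb : ∀ x ∈ L', (replicate (n-1) 1 ++ [2]) ≤ x := by
        intro x hx
        have hxW : IsNeckInW k n w x := (hmem x).mp (by rw [hL']; exact mem_cons_of_mem _ hx)
        have hα₁x : α₁ < x := by
          rw [hL'] at hpair
          exact (List.pairwise_cons.mp hpair).1 x hx
        have hxne : x ≠ replicate n 1 := by
          intro h
          rw [h, ← hrep] at hα₁x
          exact lt_irrefl _ hα₁x
        have h2 := GD.low2 (n-1) x (fun e he => (hxW.1 e he).1)
          (by rw [hxW.2.1]; omega) (by rwa [Nat.sub_add_cancel (by omega)])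
        simpa using h2
      obtain ⟨L'', hL''⟩ := GD.sorted_head hpair' hα₂L' hlb
      have hap2 : ap (replicate (n-1) 1 ++ [2]) = replicate (n-1) 1 ++ [2] := by
        apply GD.ap_count_one (hap _ hα₂L) (x := 2)
        rw [List.count_append, List.count_replicate]
        simp
      rw [hL', hL'', List.map_cons, List.map_cons, List.flatten_cons, List.flatten_cons,
        hap1, hap2, hrep]
      refine ⟨2 :: (L''.map ap).flatten, ?_⟩
      have hn1 : (replicate n 1 : List ℕ) = 1 :: replicate (n-1) 1 := by
        conv_lhs => rw [show n = (n-1)+1 by omega]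
        rw [replicate_succ]
      rw [hn1]
      simp
  · -- suffix
    have hγW : IsNeckInW k n w (replicate n k) := by
      refine ⟨?_, by simp, ?_, GD.isNecklace_replicate n k⟩
      · intro e he
        have := eq_of_mem_replicate he; omega
      · have h : w < n * k := by rw [mul_comm]; exact hw2
        simp [List.sum_replicate]
        omega
    have hγL : replicate n k ∈ L := (hmem _).mpr hγW
    have hub : ∀ x ∈ L, x ≤ replicate n k := by
      intro x hx
      have hxW := (hmem x).mp hx
      have h := GD.le_rep k x (fun e he => (hxW.1 e he).2)
      rwa [hxW.2.1] at h
    obtain ⟨M, hM⟩ := GD.sorted_last hpair hγL hub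
    have hβW : IsNeckInW k n w ((k-1) :: replicate (n-1) k) := by
      refine ⟨?_, by simp; omega, ?_, ?_⟩
      · intro e he
        rcases List.mem_cons.mp he with rfl | h
        · omega
        · have := eq_of_mem_replicate h; omega
      · have hexp : k * n = k + (n-1) * k := by
          conv_lhs => rw [show n = (n-1)+1 by omega]
          ring
        rw [hexp] at hw2
        simp [List.sum_replicate]
        omega
      · rcases le_or_gt 3 k with h3 | h3
        · have h := GD.N2 (show 2 ≤ k - 1 by omega) (show k - 1 ≤ k by omega) 0 (n-1)
          simpa using h
        · have hk2 : k = 2 := by omega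
          subst hk2
          have h := GD.N1 (show (1:ℕ) ≤ 2 by omega) 1 (n-1)
          simpa using h
    have hβL : ((k-1) :: replicate (n-1) k) ∈ L := (hmem _).mpr hβW
    have hβne : ((k-1) :: replicate (n-1) k) ≠ replicate n k := by
      intro h
      have hn1 : (replicate n k : List ℕ) = k :: replicate (n-1) k := by
        conv_lhs => rw [show n = (n-1)+1 by omega]
        rw [replicate_succ]
      rw [hn1] at h
      have := (List.cons.injEq _ _ _ _ ▸ h).1
      omega
    have hβM : ((k-1) :: replicate (n-1) k) ∈ M := by
      rw [hM] at hβL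
      rcases List.mem_append.mp hβL with h | h
      · exact h
      · simp at h; exact absurd h hβne
    have hpairM : M.Pairwise (· < ·) := by
      rw [hM] at hpair
      exact (List.pairwise_append.mp hpair).1
    have hubM : ∀ x ∈ M, x ≤ (k-1) :: replicate (n-1) k := by
      intro x hx
      have hxL : x ∈ L := by rw [hM]; exact List.mem_append_left _ hx
      have hxW := (hmem x).mp hxL
      have hxγ : x < replicate n k := by
        rw [hM] at hpair
        exact (List.pairwise_append.mp hpair).2.2 x hx _ (by simp)
      exact GD.high (fun e he => (hxW.1 e he).2) hxW.2.1 hxW.2.2.2 (ne_of_lt hxγ) (by omega)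
    obtain ⟨M', hM'⟩ := GD.sorted_last hpairM hβM hubM
    have hapβ : ap ((k-1) :: replicate (n-1) k) = (k-1) :: replicate (n-1) k := by
      apply GD.ap_count_one (hap _ hβL) (x := k-1)
      rw [show ((k-1) :: replicate (n-1) k : List ℕ) = [k-1] ++ replicate (n-1) k by simp,
        List.count_append, List.count_replicate]
      have : ¬ (k = k - 1) := by omega
      simp [this]
    have hapγ : ap (replicate n k) = [k] := GD.ap_replicate (by omega) (hap _ hγL)
    rw [hM, hM', List.map_append, List.map_append, List.flatten_append, List.flatten_append]
    simp only [List.map_cons, List.map_nil, List.flatten_cons, List.flatten_nil,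
      hapβ, hapγ, List.append_nil]
    refine ⟨(M'.map ap).flatten ++ [k-1], ?_⟩
    have hn1 : (replicate n k : List ℕ) = replicate (n-1) k ++ [k] := by
      conv_lhs => rw [show n = (n-1)+1 by omega]
      rw [replicate_succ']
    rw [hn1]
    simp
end

section
/- Fix a necklace α = a₁a₂⋯a_n over {1,…,k} with n, k > 1. For integers 0 ≤ j ≤ t ≤ n and any integer w, let P(t,j,w) denote the number of length-t strings over {1,…,k} that have weight exactly w, have prefix a₁a₂⋯a_j, and in which every non-empty suffix is lexicographically greater than α. Then: (i) P(0,0,0) = 1; (ii) P(t,j,w) = 0 whenever j = t > 0 or w ≤ 0 (except P(0,0,0) = 1); and (iii) for 0 ≤ j < t and w > 0, P(t,j,w) = P(t,j+1,w) + Σ_{x=a_{j+1}+1}^{k} P(t−j−1, 0, w − wt(a₁⋯a_j) − x). -/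
/-- `P(t,j,w)`, relative to a fixed necklace `α` over `{1,…,k}`: the number of length-`t`
strings over `{1,…,k}` with weight exactly `w`, prefix `a₁⋯a_j`, and in which every
non-empty suffix is lexicographically greater than `α`. -/
noncomputable def Pcount (k : ℕ) (α : List ℕ) (t j : ℕ) (w : ℤ) : ℕ :=
  {s : List ℕ | IsStr k s ∧ s.length = t ∧ (s.sum : ℤ) = w ∧ α.take j <+: s ∧
    ∀ suf : List ℕ, suf ≠ [] → suf <:+ s → α < suf}.ncard

section Helpers

lemma lex_append_left_iff (u v w : List ℕ) : u ++ v < u ++ w ↔ v < w := by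
  induction u with
  | nil => rfl
  | cons a u ih =>
    show List.Lex _ (a :: (u ++ v)) (a :: (u ++ w)) ↔ _
    rw [List.lex_cons_iff]; exact ih

lemma prefix_le {u v : List ℕ} (h : u <+: v) : u ≤ v := by
  obtain ⟨w, rfl⟩ := h
  rcases w with _ | ⟨a, w⟩
  · simp
  · refine le_of_lt ?_
    have : ([] : List ℕ) < a :: w := List.Lex.nil
    simpa using (lex_append_left_iff u [] (a :: w)).2 this

lemma lt_of_take_lt : ∀ (m : ℕ) {u v : List ℕ}, u.take m < v.take m → u < v := by
  intro m
  induction m with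
  | zero => intro u v h; simp at h
  | succ m ih =>
    intro u v h
    rcases u with _ | ⟨a, u⟩ <;> rcases v with _ | ⟨b, v⟩ <;> simp only [List.take] at h
    · exact absurd h List.not_lex_nil
    · exact List.Lex.nil
    · exact absurd h List.not_lex_nil
    · rcases h with _ | h | h
      · exact List.Lex.rel h
      · exact List.Lex.cons (ih h)

lemma take_le_take {u v : List ℕ} (h : u ≤ v) (m : ℕ) : u.take m ≤ v.take m := by
  by_contra hc
  exact absurd (le_of_lt (lt_of_take_lt m (lt_of_not_ge hc)))
    (not_le.2 (lt_of_le_of_ne h (by rintro rfl; exact hc (le_refl _))))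

lemma getD_le_of_take_eq {u v : List ℕ} (h : u ≤ v) {m : ℕ} (ht : u.take m = v.take m)
    (hu : m < u.length) (hv : m < v.length) : u.getD m 0 ≤ v.getD m 0 := by
  by_contra hc
  push_neg at hc
  have hvu : v < u := by
    have hu' : u = u.take m ++ u.getD m 0 :: u.drop (m+1) := by
      rw [List.getD_eq_getElem _ _ hu]
      conv_lhs => rw [← List.take_append_drop m u, List.drop_eq_getElem_cons hu]
    have hv' : v = u.take m ++ v.getD m 0 :: v.drop (m+1) := by
      rw [List.getD_eq_getElem _ _ hv, ht]
      conv_lhs => rw [← List.take_append_drop m v, List.drop_eq_getElem_cons hv]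
    rw [hu', hv']
    exact (lex_append_left_iff _ _ _).2 (List.Lex.rel hc)
  exact absurd hvu (not_lt.2 h)

lemma lex_append_of_lt : ∀ {u v : List ℕ}, u < v → v.length ≤ u.length →
    ∀ s t, u ++ s < v ++ t := by
  intro u v h
  induction h with
  | nil => intro h; simp at h
  | @cons a l₁ l₂ h ih => intro hl s t; exact List.Lex.cons (ih (by simpa using hl) s t)
  | rel h => intro _ s t; exact List.Lex.rel h

lemma neck_key {α : List ℕ} (hneck : IsNecklace α)
    (i m x : ℕ) (him : i + m < α.length) (hx : α.getD (i+m) 0 < x) (r : List ℕ) :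
    α < (α.drop i).take m ++ x :: r := by
  have hi : i ≤ α.length := by omega
  have hδ : α ≤ α.drop i ++ α.take i := by
    have := hneck i
    rwa [List.rotate_eq_drop_append_take hi] at this
  set δ := α.drop i ++ α.take i with hδdef
  have hmd : m ≤ (α.drop i).length := by simp; omega
  have hγ : δ.take m = (α.drop i).take m := List.take_append_of_le_length hmd
  have htake := take_le_take hδ m
  rw [hγ] at htake
  rcases lt_or_eq_of_le htake with h1 | h2
  · have hml : ((α.drop i).take m).length ≤ (α.take m).length := by simp
    have := lex_append_of_lt h1 hml (α.drop m) (x :: r)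
    rwa [List.take_append_drop] at this
  · have hm : m < α.length := by omega
    have hαm : α.getD m 0 ≤ δ.getD m 0 :=
      getD_le_of_take_eq hδ (h2.trans hγ.symm) hm (by simp [hδdef]; omega)
    have hδm : δ.getD m 0 = α.getD (i+m) 0 := by
      rw [hδdef, List.getD_append _ _ _ _ (by simpa using by omega : m < (α.drop i).length)]
      rw [List.getD_eq_getElem _ _ (by simpa using by omega : m < (α.drop i).length),
        List.getD_eq_getElem _ _ him, List.getElem_drop]
    have hx' : α.getD m 0 < x := lt_of_le_of_lt (hδm ▸ hαm) hx
    conv_lhs => rw [← List.take_append_drop m α, h2]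
    apply (lex_append_left_iff _ _ _).2
    rw [List.drop_eq_getElem_cons hm]
    exact List.Lex.rel (by rwa [List.getD_eq_getElem _ _ hm] at hx')

lemma ncard_biUnion_sum (s : Finset ℕ) (f : ℕ → Set (List ℕ))
    (hfin : ∀ i ∈ s, (f i).Finite)
    (hdis : ∀ i ∈ s, ∀ j ∈ s, i ≠ j → Disjoint (f i) (f j)) :
    (⋃ i ∈ s, f i).ncard = ∑ i ∈ s, (f i).ncard := by
  induction s using Finset.induction_on with
  | empty => simp
  | @insert a s ha ih =>
    rw [Finset.sum_insert ha]
    have h1 : (⋃ i ∈ insert a s, f i) = f a ∪ ⋃ i ∈ s, f i := by simp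
    have hfin' : (⋃ i ∈ s, f i).Finite :=
      Set.Finite.biUnion s.finite_toSet fun i hi => hfin i (by simp at hi; simp [hi])
    have hd : Disjoint (f a) (⋃ i ∈ s, f i) := by
      simp only [Set.disjoint_iUnion_right]
      intro i hi
      exact hdis a (by simp) i (by simp [hi]) (by rintro rfl; exact ha hi)
    rw [h1, Set.ncard_union_eq hd (hfin a (by simp)) hfin',
      ih (fun i hi => hfin i (by simp [hi]))
        (fun i hi j hj hij => hdis i (by simp [hi]) j (by simp [hj]) hij)]

lemma finite_strs (k : ℕ) : ∀ t, {s : List ℕ | s.length = t ∧ ∀ x ∈ s, x ≤ k}.Finite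
  | 0 => (Set.finite_singleton []).subset (by
      rintro s ⟨hl, _⟩
      simp [List.length_eq_zero_iff.mp hl])
  | (t+1) => (((Set.finite_Iic k).prod (finite_strs k t)).image
        (fun p => p.1 :: p.2)).subset (by
      rintro (_ | ⟨b, s⟩) ⟨hl, hm⟩
      · simp at hl
      · exact ⟨(b, s), ⟨hm b (by simp), by simpa using hl,
          fun x hx => hm x (by simp [hx])⟩, rfl⟩)

lemma sum_ge_length {k : ℕ} : ∀ {s : List ℕ}, IsStr k s → s.length ≤ s.sum := by
  intro s
  induction s with
  | nil => intro _; simp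
  | cons a s ih =>
    intro h
    have h1 := (h a (by simp)).1
    have h2 := ih (fun x hx => h x (by simp [hx]))
    simp only [List.length_cons, List.sum_cons]
    omega

end Helpers

/-- The recurrence for `P(t,j,w)` from Section 6.1. -/
theorem Pcount_recurrence
    (n k : ℕ) (hn : 1 < n) (hk : 1 < k) (α : List ℕ)
    (hstr : IsStr k α) (hlen : α.length = n) (hneck : IsNecklace α) :
    -- (i)
    Pcount k α 0 0 0 = 1 ∧
    -- (ii)  `P(t,j,w) = 0` when `j = t > 0`, or when `w ≤ 0` except `P(0,0,0)`
    (∀ t : ℕ, 0 < t → t ≤ n → ∀ w : ℤ, Pcount k α t t w = 0) ∧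
    (∀ t j : ℕ, j ≤ t → t ≤ n → ∀ w : ℤ, w ≤ 0 → ¬(t = 0 ∧ j = 0 ∧ w = 0) →
      Pcount k α t j w = 0) ∧
    -- (iii)
    (∀ t j : ℕ, j < t → t ≤ n → ∀ w : ℤ, 0 < w →
      Pcount k α t j w = Pcount k α t (j + 1) w +
        ∑ x ∈ Finset.Icc (α.getD j 0 + 1) k,
          Pcount k α (t - j - 1) 0 (w - ((α.take j).sum : ℤ) - (x : ℤ))) := by
  refine ⟨?_, ?_, ?_, ?_⟩
  · -- (i)
    have hset : {s : List ℕ | IsStr k s ∧ s.length = 0 ∧ (s.sum : ℤ) = 0 ∧ α.take 0 <+: s ∧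
        ∀ suf : List ℕ, suf ≠ [] → suf <:+ s → α < suf} = {([] : List ℕ)} := by
      ext s
      constructor
      · rintro ⟨-, hl, -⟩; simp [List.length_eq_zero_iff.mp hl]
      · rintro rfl
        refine ⟨fun x hx => by simp at hx, rfl, by simp, by simp, ?_⟩
        intro suf hne hsuf
        exact absurd (List.suffix_nil.mp hsuf) hne
    show Set.ncard _ = 1
    rw [hset, Set.ncard_singleton]
  · -- (ii-a)
    intro t ht htn w
    show Set.ncard _ = 0
    convert Set.ncard_empty (List ℕ)
    ext s
    simp only [Set.mem_setOf_eq, Set.mem_empty_iff_false, iff_false]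
    rintro ⟨hstr', hl, hsum, hpre, hsuf⟩
    have hlt : (α.take t).length = t := by rw [List.length_take, hlen]; omega
    have hs : s = α.take t := (List.IsPrefix.eq_of_length hpre (by omega)).symm
    have h1 : α < s := hsuf s (by rw [hs, ← List.length_pos_iff, hlt]; omega) (List.suffix_refl s)
    have h2 : s ≤ α := hs ▸ prefix_le (List.take_prefix t α)
    exact absurd (lt_of_lt_of_le h1 h2) (lt_irrefl α)
  · -- (ii-b)
    intro t j hjt htn w hw hne
    show Set.ncard _ = 0
    convert Set.ncard_empty (List ℕ)
    ext s
    simp only [Set.mem_setOf_eq, Set.mem_empty_iff_false, iff_false]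
    rintro ⟨hstr', hl, hsum, hpre, hsuf⟩
    rcases Nat.eq_zero_or_pos t with rfl | ht
    · have hs : s = [] := List.length_eq_zero_iff.mp hl
      apply hne
      refine ⟨rfl, by omega, ?_⟩
      rw [← hsum, hs]; simp
    · have := sum_ge_length hstr'
      have : (1 : ℤ) ≤ (s.sum : ℤ) := by exact_mod_cast by omega
      omega
  · -- (iii)
    intro t j hjt htn w hw
    have hj : j < α.length := by omega
    set a := α.getD j 0 with hadef
    have hmema : a ∈ α := by
      rw [hadef, List.getD_eq_getElem _ _ hj]; exact List.getElem_mem hj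
    have ha1 : 1 ≤ a := (hstr a hmema).1
    have hak : a ≤ k := (hstr a hmema).2
    have htj : (α.take j).length = j := by rw [List.length_take, hlen]; omega
    have haux : α.take (j+1) = α.take j ++ [a] := by
      rw [hadef, List.getD_eq_getElem _ _ hj, List.take_succ, List.getElem?_eq_getElem hj]
      rfl
    set S : Set (List ℕ) := {s : List ℕ | IsStr k s ∧ s.length = t ∧ (s.sum : ℤ) = w ∧
      α.take j <+: s ∧ ∀ suf : List ℕ, suf ≠ [] → suf <:+ s → α < suf} with hSdef
    -- decomposition of elements of S
    have hdec : ∀ s ∈ S, ∃ b r, s = α.take j ++ b :: r ∧ s.getD j 0 = b := by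
      rintro s ⟨hstr', hl, hsum, hpre, hsuf⟩
      obtain ⟨u, hu⟩ := hpre
      rcases u with _ | ⟨b, r⟩
      · exfalso
        have := congrArg List.length hu
        simp [htj, hl] at this
        omega
      · refine ⟨b, r, hu.symm, ?_⟩
        rw [← hu, List.getD_append_right _ _ _ _ (le_of_eq htj), htj]
        simp
    -- the slices
    set Sx : ℕ → Set (List ℕ) := fun x => {s | s ∈ S ∧ s.getD j 0 = x} with hSxdef
    -- bounds on the (j+1)-st letter
    have hbounds : ∀ s ∈ S, a ≤ s.getD j 0 ∧ s.getD j 0 ≤ k := by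
      intro s hs
      obtain ⟨b, r, hsr, hgd⟩ := hdec s hs
      obtain ⟨hstr', hl, hsum, hpre, hsuf⟩ := hs
      have hbk : b ≤ k := (hstr' b (by rw [hsr]; simp)).2
      have hαs : α < s := hsuf s (by rw [← List.length_pos_iff]; omega) (List.suffix_refl s)
      have hα' : α = α.take j ++ a :: α.drop (j+1) := by
        conv_lhs => rw [← List.take_append_drop j α, List.drop_eq_getElem_cons hj]
        rw [hadef, List.getD_eq_getElem _ _ hj]
      rw [hα', hsr] at hαs
      have := (lex_append_left_iff _ _ _).1 hαs
      have hab : a ≤ b := List.head_le_of_lt this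
      rw [hgd]
      exact ⟨hab, hbk⟩
    have hSfin : S.Finite := (finite_strs k t).subset (by
      rintro s ⟨hstr', hl, -⟩
      exact ⟨hl, fun x hx => (hstr' x hx).2⟩)
    have hcover : S = ⋃ x ∈ Finset.Icc a k, Sx x := by
      ext s
      constructor
      · intro hs
        have hb := hbounds s hs
        exact Set.mem_biUnion (Finset.mem_Icc.2 hb) ⟨hs, rfl⟩
      · intro hmem
        simp only [Set.mem_iUnion] at hmem
        obtain ⟨x, -, hs, -⟩ := hmem
        exact hs
    have hcard : Pcount k α t j w = ∑ x ∈ Finset.Icc a k, (Sx x).ncard := by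
      show S.ncard = _
      rw [hcover]
      exact ncard_biUnion_sum _ _
        (fun x _ => hSfin.subset (fun s hs => hs.1))
        (fun x _ y _ hxy => by
          rw [Set.disjoint_left]
          rintro s ⟨-, rfl⟩ ⟨-, h⟩
          exact hxy h)
    -- the slice at a is the (j+1) count
    have hslice_a : Pcount k α t (j+1) w = (Sx a).ncard := by
      show Set.ncard _ = _
      congr 1
      ext s
      constructor
      · rintro ⟨hstr', hl, hsum, hpre, hsuf⟩
        obtain ⟨u, hu⟩ := hpre
        rw [haux] at hu
        have hpre' : α.take j <+: s := ⟨[a] ++ u, by rw [← hu]; simp⟩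
        have hsS : s ∈ S := ⟨hstr', hl, hsum, hpre', hsuf⟩
        refine ⟨hsS, ?_⟩
        rw [← hu, List.append_assoc, List.getD_append_right _ _ _ _ (le_of_eq htj), htj]
        simp
      · rintro ⟨hs, hgd⟩
        obtain ⟨b, r, hsr, hgd'⟩ := hdec s hs
        obtain ⟨hstr', hl, hsum, hpre, hsuf⟩ := hs
        have hb : b = a := by rw [← hgd', hgd]
        subst hb
        refine ⟨hstr', hl, hsum, ?_, hsuf⟩
        rw [haux, hsr]
        exact ⟨r, by simp⟩
    -- the slice at x > a is an image
    have hslice_x : ∀ x ∈ Finset.Icc (a+1) k,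
        (Sx x).ncard = Pcount k α (t - j - 1) 0 (w - ((α.take j).sum : ℤ) - (x : ℤ)) := by
      intro x hx
      rw [Finset.mem_Icc] at hx
      have hinj : Function.Injective (fun r : List ℕ => α.take j ++ x :: r) := by
        intro r1 r2 h
        simpa using h
      have himg : Sx x = (fun r : List ℕ => α.take j ++ x :: r) ''
          {r : List ℕ | IsStr k r ∧ r.length = t - j - 1 ∧
            (r.sum : ℤ) = w - ((α.take j).sum : ℤ) - (x : ℤ) ∧ α.take 0 <+: r ∧
            ∀ suf : List ℕ, suf ≠ [] → suf <:+ r → α < suf} := by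
        ext s
        constructor
        · rintro ⟨hs, hgd⟩
          obtain ⟨b, r, hsr, hgd'⟩ := hdec s hs
          obtain ⟨hstr', hl, hsum, hpre, hsuf⟩ := hs
          have hb : b = x := by rw [← hgd', hgd]
          rw [hb] at hsr
          refine ⟨r, ⟨?_, ?_, ?_, by simp, ?_⟩, hsr.symm⟩
          · intro y hy
            exact hstr' y (by rw [hsr]; simp [hy])
          · have := congrArg List.length hsr
            simp [htj, hl] at this
            omega
          · have hsum' : s.sum = (α.take j).sum + (x + r.sum) := by rw [hsr]; simp
            have : ((α.take j).sum : ℤ) + (x : ℤ) + (r.sum : ℤ) = w := by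
              rw [← hsum, hsum']; push_cast; ring
            linarith
          · intro suf hne hsuf'
            refine hsuf suf hne (hsuf'.trans ?_)
            rw [hsr, show α.take j ++ x :: r = (α.take j ++ [x]) ++ r by simp]
            exact List.suffix_append _ _
        · rintro ⟨r, ⟨hstrr, hlr, hsumr, -, hsufr⟩, rfl⟩
          show (α.take j ++ x :: r) ∈ Sx x
          have hlens : (α.take j ++ x :: r).length = t := by
            simp [htj, hlr]; omega
          refine ⟨⟨?_, hlens, ?_, ⟨x :: r, rfl⟩, ?_⟩, ?_⟩
          · intro y hy
            simp only [List.mem_append, List.mem_cons] at hy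
            rcases hy with hy | rfl | hy
            · exact hstr y (List.mem_of_mem_take hy)
            · omega
            · exact hstrr y hy
          · have h2 : (α.take j ++ x :: r).sum = (α.take j).sum + (x + r.sum) := by simp
            rw [h2, Nat.cast_add, Nat.cast_add]
            linarith
          · intro suf hne hsuf'
            obtain ⟨pre, hpre'⟩ := hsuf'
            have hsufeq : suf = (α.take j ++ x :: r).drop pre.length := by
              rw [← hpre', List.drop_left]
            rcases le_or_gt pre.length j with hij | hij
            · rw [hsufeq, List.drop_append_of_le_length (by omega : pre.length ≤ (α.take j).length),
                List.drop_take]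
              have := neck_key hneck pre.length (j - pre.length) x
                (by omega) (by rw [show pre.length + (j - pre.length) = j by omega]; omega) r
              exact this
            · rw [hsufeq, List.drop_append,
                List.drop_eq_nil_of_le (by omega : (α.take j).length ≤ pre.length), List.nil_append,
                htj, show pre.length - j = (pre.length - j - 1) + 1 by omega,
                List.drop_succ_cons]
              refine hsufr _ ?_ (List.drop_suffix _ _)
              rw [hsufeq, List.drop_append,
                List.drop_eq_nil_of_le (by omega : (α.take j).length ≤ pre.length),
                List.nil_append, htj,
                show pre.length - j = (pre.length - j - 1) + 1 by omega,
                List.drop_succ_cons] at hne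
              exact hne
          · rw [List.getD_append_right _ _ _ _ (le_of_eq htj), htj]
            simp
      rw [himg, Set.ncard_image_of_injective _ hinj]
      rfl
    -- put it together
    rw [hcard, Finset.Icc_eq_cons_Ioc hak, Finset.sum_cons, hslice_a, ← Finset.Icc_add_one_left_eq_Ioc]
    congr 1
    exact Finset.sum_congr rfl hslice_x
end

section
/- Let n, k > 1 and let α = a₁a₂⋯a_n be a necklace in S_k(n,w↑). For 1 ≤ t ≤ n and 0 ≤ j ≤ n−1, let A(t,j) be the number of strings s = s₁⋯s_n in S_k(n,w↑) whose lexicographically smallest rotation is smaller than α, such that t is the smallest index for which the rotation s_t⋯s_n s₁⋯s_{t−1} is lexicographically smaller than α, and j is the largest integer such that a₁⋯a_j is a prefix of that rotation. Suppose t + j > n, and let z be the length of the longest suffix of a_{n−t+2}⋯a_{j−1}a_j that equals the prefix a₁⋯a_z of α of the same length. If a_{j+1} > a_{z+1}, then A(t,j) = B(n−j+z, z+1, w − wt(a₁⋯a_{j−z})) + Σ_{x=a_{z+1}+1}^{a_{j+1}−1} B(n−j−1, 0, w − wt(a₁⋯a_j) − x), where B(t',j',w') denotes the number of length-t' strings over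 {1,…,k} with weight at least w', prefix a₁⋯a_{j'}, and all non-empty suffixes lexicographically greater than α; otherwise (if a_{j+1} ≤ a_{z+1}) A(t,j) = 0. -/
/-- `A(t,j)`: the number of strings `s` in `S_k(n,w↑)` whose lexicographically smallest
rotation is smaller than `α`, `t` (1-based) being the smallest index for which the
rotation `s_t⋯s_n s₁⋯s_{t-1}` is smaller than `α`, and `j` the largest integer such that
`a₁⋯a_j` is a prefix of that rotation. -/
noncomputable def Acount (k n w : ℕ) (α : List ℕ) (t j : ℕ) : ℕ :=
  {s : List ℕ | IsStr k s ∧ s.length = n ∧ w ≤ s.sum ∧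
    s.rotate (t - 1) < α ∧
    (∀ t' : ℕ, 1 ≤ t' → t' < t → ¬ s.rotate (t' - 1) < α) ∧
    α.take j <+: s.rotate (t - 1) ∧
    (∀ j' : ℕ, α.take j' <+: s.rotate (t - 1) → j' ≤ j)}.ncard

/-- `B(t',j',w')`: the number of length-`t'` strings over `{1,…,k}` with weight at least
`w'`, prefix `a₁⋯a_{j'}`, whose non-empty suffixes are all lexicographically greater
than `α`. -/
noncomputable def Bcount (k : ℕ) (α : List ℕ) (t j : ℕ) (w : ℤ) : ℕ :=
  {s : List ℕ | IsStr k s ∧ s.length = t ∧ w ≤ (s.sum : ℤ) ∧ α.take j <+: s ∧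
    ∀ suf : List ℕ, suf ≠ [] → suf <:+ s → α < suf}.ncard


set_option linter.unusedSectionVars false
set_option maxHeartbeats 1000000

namespace AC2
open List

lemma lt_iff_Lex (u v : List ℕ) : u < v ↔ List.Lex (· < ·) u v := Iff.rfl

lemma append_lt_append_iff (w u v : List ℕ) : w ++ u < w ++ v ↔ u < v := by
  induction w with
  | nil => rfl
  | cons a w ih => rw [List.cons_append, List.cons_append, lt_iff_Lex, List.lex_cons_iff]; exact ih

lemma append_le_append_iff (w u v : List ℕ) : w ++ u ≤ w ++ v ↔ u ≤ v := by
  rw [← not_lt, ← not_lt, append_lt_append_iff]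

lemma lt_append_of_lt_of_le (u v s : List ℕ) (h : u < v) (hl : v.length ≤ u.length) :
    u < v ++ s := by
  rw [lt_iff_Lex] at h ⊢
  induction h with
  | @nil b bs => simp at hl
  | @rel a l₁ b l₂ hab => exact List.Lex.rel hab
  | @cons a l₁ l₂ h ih => exact List.Lex.cons (ih (by simpa using hl))

lemma append_lt_append (u v s tt : List ℕ) (h : u < v) (hl : u.length = v.length) :
    u ++ s < v ++ tt := by
  rw [lt_iff_Lex] at h ⊢
  induction h with
  | @nil b bs => simp at hl
  | @rel a l₁ b l₂ hab => exact List.Lex.rel hab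
  | @cons a l₁ l₂ h ih => exact List.Lex.cons (ih (by simpa using hl))

lemma append_lt_of_lt_of_ne_take (u v s : List ℕ) (h : u < v)
    (hne : u ≠ v.take u.length) : u ++ s < v := by
  rw [lt_iff_Lex] at h ⊢
  induction h with
  | @nil b bs => simp at hne
  | @rel a l₁ b l₂ hab => exact List.Lex.rel hab
  | @cons a l₁ l₂ h ih =>
      refine List.Lex.cons (ih ?_)
      simp only [List.length_cons, List.take_succ_cons] at hne
      intro hc; exact hne (by rw [← hc])

lemma take_le_take (u v : List ℕ) (p : ℕ) (h : u ≤ v) (hl : u.length = v.length) :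
    u.take p ≤ v.take p := by
  by_contra hc
  rw [not_le] at hc
  have := append_lt_append (v.take p) (u.take p) (v.drop p) (u.drop p) hc (by simp [hl])
  rw [List.take_append_drop, List.take_append_drop] at this
  exact absurd h (not_le.2 this)

lemma singleton_le_singleton {a b : ℕ} (h : [a] ≤ [b]) : a ≤ b := by
  by_contra hc
  rw [not_le] at hc
  exact absurd h (not_le.2 (List.Lex.rel hc))

-- take/drop rewriting helpers
lemma lt_of_drop_lt (u v : List ℕ) (p : ℕ) (h : u.take p = v.take p)
    (h2 : u.drop p < v.drop p) : u < v := by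
  have h3 := (append_lt_append_iff (v.take p) (u.drop p) (v.drop p)).2 h2
  rwa [← h, List.take_append_drop p u, h, List.take_append_drop] at h3

lemma drop_lt_of_lt (u v : List ℕ) (p : ℕ) (h : u.take p = v.take p)
    (h2 : u < v) : u.drop p < v.drop p := by
  refine (append_lt_append_iff (v.take p) _ _).1 ?_
  rwa [← h, List.take_append_drop p u, h, List.take_append_drop]

lemma drop_le_of_le (u v : List ℕ) (p : ℕ) (h : u.take p = v.take p)
    (h2 : u ≤ v) : u.drop p ≤ v.drop p := by
  by_contra hc
  rw [not_le] at hc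
  exact absurd h2 (not_le.2 (lt_of_drop_lt v u p h.symm hc))

lemma drop_eq_getD_cons (l : List ℕ) (i : ℕ) (h : i < l.length) :
    l.drop i = l.getD i 0 :: l.drop (i+1) := by
  rw [List.drop_eq_getElem_cons h, List.getD_eq_getElem _ _ h]

lemma take_succ_getD (l : List ℕ) (i : ℕ) (h : i < l.length) :
    l.take (i+1) = l.take i ++ [l.getD i 0] := by
  rw [List.take_succ, List.getElem?_eq_getElem h, List.getD_eq_getElem _ _ h]
  rfl

lemma getD_drop (l : List ℕ) (i p : ℕ) (h : i + p < l.length) :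
    (l.drop i).getD p 0 = l.getD (i+p) 0 := by
  rw [List.getD_eq_getElem _ _ (by simp; omega), List.getD_eq_getElem _ _ h,
    List.getElem_drop]

lemma getD_append_right (l₁ l₂ : List ℕ) (i : ℕ) :
    (l₁ ++ l₂).getD (l₁.length + i) 0 = l₂.getD i 0 := by
  by_cases h : i < l₂.length
  · rw [List.getD_eq_getElem _ _ (by simp; omega), List.getD_eq_getElem _ _ h,
      List.getElem_append_right (by omega)]
    congr 1; omega
  · rw [List.getD_eq_default _ _ (by simp; omega), List.getD_eq_default _ _ (by omega)]

lemma getD_of_take_eq (l₁ l₂ : List ℕ) (i : ℕ) (h : l₁.take (i+1) = l₂.take (i+1))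
    (h1 : i < l₁.length) (h2 : i < l₂.length) : l₁.getD i 0 = l₂.getD i 0 := by
  have := take_succ_getD l₁ i h1
  rw [h, take_succ_getD l₂ i h2] at this
  have h3 : l₁.take i = l₂.take i := by
    have := congrArg (fun l => List.take i l) h
    simpa [List.take_take] using this
  rw [h3] at this
  exact List.singleton_injective (List.append_cancel_left this) |>.symm ▸ rfl

end AC2

namespace AC2
open List

lemma finite_str (k t : ℕ) (P : List ℕ → Prop) :
    {s : List ℕ | IsStr k s ∧ s.length = t ∧ P s}.Finite := by
  have h1 : {l : List (Fin (k+1)) | l.length = t}.Finite := List.finite_length_eq _ t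
  have h2 : ((fun l : List (Fin (k+1)) => l.map Fin.val) '' {l | l.length = t}).Finite :=
    h1.image _
  refine h2.subset ?_
  rintro s ⟨hstr, hlen, -⟩
  refine ⟨s.pmap (fun x h => (⟨x, h⟩ : Fin (k+1))) (fun x hx => Nat.lt_succ_of_le (hstr x hx).2), ?_, ?_⟩
  · simpa using hlen
  · simp [List.map_pmap]

lemma ncard_biUnion (F : Finset ℕ) (S : ℕ → Set (List ℕ)) (hf : ∀ x ∈ F, (S x).Finite)
    (hd : ∀ x ∈ F, ∀ y ∈ F, x ≠ y → Disjoint (S x) (S y)) :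
    (⋃ x ∈ F, S x).ncard = ∑ x ∈ F, (S x).ncard := by
  classical
  induction F using Finset.induction_on with
  | empty => simp
  | @insert a F ha ih =>
      rw [Finset.sum_insert ha]
      have hbU : (⋃ x ∈ F, S x) = ⋃ x ∈ (F : Set ℕ), S x := by simp
      rw [show (⋃ x ∈ (insert a F : Finset ℕ), S x) = S a ∪ ⋃ x ∈ F, S x by
        simp [Finset.coe_insert, Set.biUnion_insert]]
      rw [Set.ncard_union_eq ?disj ?f1 ?f2]
      · rw [ih (fun x hx => hf x (Finset.mem_insert_of_mem hx))
          (fun x hx y hy => hd x (Finset.mem_insert_of_mem hx) y (Finset.mem_insert_of_mem hy))]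
      case disj =>
        refine Set.disjoint_left.2 ?_
        rintro r hra hr
        simp only [Set.mem_iUnion] at hr
        obtain ⟨x, hxF, hrx⟩ := hr
        exact Set.disjoint_left.1
          (hd a (Finset.mem_insert_self a F) x (Finset.mem_insert_of_mem hxF)
            (by rintro rfl; exact ha hxF)) hra hrx
      case f1 => exact hf a (Finset.mem_insert_self a F)
      case f2 =>
        rw [hbU]
        exact Set.Finite.biUnion (F.finite_toSet) (fun x hx => hf x (Finset.mem_insert_of_mem (by simpa using hx)))
end AC2

namespace AC2
open List

lemma neck_take (α : List ℕ) (hneck : IsNecklace α) (i p : ℕ) (hip : i + p ≤ α.length) :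
    α.take p ≤ (α.drop i).take p := by
  have h := hneck i
  rw [List.rotate_eq_drop_append_take (by omega)] at h
  have := take_le_take α (α.drop i ++ α.take i) p h (by simp; omega)
  rwa [List.take_append_of_le_length (by simp; omega)] at this

lemma suffix_key (α r : List ℕ) (hlen : r.length = α.length)
    (hneck : IsNecklace α) (hrlt : r < α)
    (i : ℕ) (hi1 : 0 < i) (hi2 : i < α.length)
    (hrot : α ≤ r.rotate i) : α < r.drop i := by
  by_contra hc
  rw [not_lt] at hc
  have hne : r.drop i ≠ α := by
    intro h
    have := congrArg List.length h
    simp [hlen] at this; omega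
  have hlt : r.drop i < α := lt_of_le_of_ne hc hne
  have hroteq : r.rotate i = r.drop i ++ r.take i :=
    List.rotate_eq_drop_append_take (by omega)
  by_cases hpre : r.drop i = α.take ((r.drop i).length)
  · have hdlen : (r.drop i).length = α.length - i := by simp [hlen]
    rw [hdlen] at hpre
    have hrot' : α ≤ α.take (α.length - i) ++ r.take i := by
      rw [hroteq, hpre] at hrot; exact hrot
    have hx1 : α.drop (α.length - i) ≤ r.take i := by
      have := drop_le_of_le α (α.take (α.length - i) ++ r.take i) (α.length - i)
        (by rw [List.take_append_of_le_length (by simp), List.take_take,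
              min_self]) hrot'
      rwa [List.drop_left' (by simp [hlen])] at this
    have hx2 : α.take i ≤ α.drop (α.length - i) := by
      have h := hneck (α.length - i)
      rw [List.rotate_eq_drop_append_take (by omega)] at h
      have := take_le_take α (α.drop (α.length - i) ++ α.take (α.length - i)) i h (by simp)
      rwa [List.take_left' (by simp [hlen]; omega)] at this
    have hx3 : r.take i ≤ α.take i := take_le_take r α i (le_of_lt hrlt) hlen
    have heq : r.take i = α.drop (α.length - i) :=
      le_antisymm (le_trans hx3 hx2) hx1
    have hr : r = α.rotate (α.length - i) := by
      rw [List.rotate_eq_drop_append_take (by omega), ← heq, ← hpre,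
        List.take_append_drop]
    exact absurd hrlt (not_lt.2 (hr ▸ hneck (α.length - i)))
  · have := append_lt_of_lt_of_ne_take (r.drop i) α (r.take i) hlt hpre
    rw [← hroteq] at this
    exact absurd hrot (not_le.2 this)
end AC2

namespace AC2
open List

lemma lex_cons_head {a b : ℕ} {u v : List ℕ} (h : List.Lex (· < ·) (a::u) (b::v))
    (hne : a ≠ b) : a < b := by
  cases h with
  | rel h => exact h
  | cons h => exact absurd rfl hne

def RSet (k n w : ℕ) (α : List ℕ) (t j : ℕ) : Set (List ℕ) :=
  {r | IsStr k r ∧ r.length = n ∧ w ≤ r.sum ∧ r.take j = α.take j ∧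
       r.getD j 0 < α.getD j 0 ∧ ∀ i, n - t < i → i < n → α ≤ r.rotate i}

lemma lt_char (α r : List ℕ) (j : ℕ) (hj : j < α.length) (hjr : j < r.length)
    (htake : r.take j = α.take j) (hlt : r.getD j 0 < α.getD j 0) : r < α :=
  lt_of_drop_lt r α j htake (by
    rw [drop_eq_getD_cons r j hjr, drop_eq_getD_cons α j hj]
    exact List.Lex.rel hlt)

lemma getD_lt_of (α r : List ℕ) (j : ℕ) (hj : j < α.length) (hjr : j < r.length)
    (htake : r.take j = α.take j) (hlt : r < α)
    (hne : r.getD j 0 ≠ α.getD j 0) : r.getD j 0 < α.getD j 0 := by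
  have h2 := drop_lt_of_lt r α j htake hlt
  rw [drop_eq_getD_cons r j hjr, drop_eq_getD_cons α j hj] at h2
  exact lex_cons_head h2 hne

lemma Acount_eq (n k w : ℕ) (α : List ℕ) (hlen : α.length = n) (t j : ℕ)
    (ht1 : 1 ≤ t) (htn : t ≤ n) (hjlt : j < n) :
    Acount k n w α t j = (RSet k n w α t j).ncard := by
  have hACres : Acount k n w α t j = Set.ncard {s : List ℕ | IsStr k s ∧ s.length = n ∧ w ≤ s.sum ∧
      s.rotate (t - 1) < α ∧
      (∀ t' : ℕ, 1 ≤ t' → t' < t → ¬ s.rotate (t' - 1) < α) ∧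
      α.take j <+: s.rotate (t - 1) ∧
      (∀ j' : ℕ, α.take j' <+: s.rotate (t - 1) → j' ≤ j)} := rfl
  rw [hACres]
  have himg : {s : List ℕ | IsStr k s ∧ s.length = n ∧ w ≤ s.sum ∧
      s.rotate (t - 1) < α ∧
      (∀ t' : ℕ, 1 ≤ t' → t' < t → ¬ s.rotate (t' - 1) < α) ∧
      α.take j <+: s.rotate (t - 1) ∧
      (∀ j' : ℕ, α.take j' <+: s.rotate (t - 1) → j' ≤ j)}
      = (fun r => r.rotate (n - t + 1)) '' (RSet k n w α t j) := by
    ext s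
    constructor
    · rintro ⟨h1, h2, h3, h4, h5, h6, h7⟩
      refine ⟨s.rotate (t-1), ⟨?_, ?_, ?_, ?_, ?_, ?_⟩, ?_⟩
      · intro x hx; exact h1 x (List.mem_rotate.1 hx)
      · simp [h2]
      · rw [(List.rotate_perm s (t-1)).sum_eq]; exact h3
      · have := List.prefix_iff_eq_take.1 h6
        rw [List.length_take, hlen, min_eq_left (le_of_lt hjlt)] at this
        exact this.symm
      · -- getD j < getD j
        have htk : (s.rotate (t-1)).take j = α.take j := by
          have := List.prefix_iff_eq_take.1 h6
          rw [List.length_take, hlen, min_eq_left (le_of_lt hjlt)] at this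
          exact this.symm
        refine getD_lt_of α _ j (by omega) (by simp [h2]; omega) htk h4 ?_
        intro heq
        have hpre : α.take (j+1) <+: s.rotate (t-1) := by
          rw [List.prefix_iff_eq_take, List.length_take, hlen,
            min_eq_left (by omega), take_succ_getD α j (by omega),
            take_succ_getD (s.rotate (t-1)) j (by simp [h2]; omega), htk, heq]
        have := h7 (j+1) hpre
        omega
      · intro i hi1 hi2
        have hrr : (s.rotate (t-1)).rotate i = s.rotate (t - 1 + i) := by
          rw [List.rotate_rotate]
        have hsn : s.rotate n = s := by rw [← h2]; exact List.rotate_length s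
        have hmod : s.rotate (t - 1 + i) = s.rotate (t - 1 + i - n) := by
          conv_lhs => rw [show t - 1 + i = n + (t - 1 + i - n) by omega,
            ← List.rotate_rotate, hsn]
        have ht' : ¬ s.rotate ((t + i - n) - 1) < α :=
          h5 (t + i - n) (by omega) (by omega)
        rw [not_lt] at ht'
        rw [hrr, hmod, show t - 1 + i - n = (t + i - n) - 1 by omega]
        exact ht'
      · show (s.rotate (t - 1)).rotate (n - t + 1) = s
        rw [List.rotate_rotate, show t - 1 + (n - t + 1) = n by omega, ← h2,
          List.rotate_length]
    · rintro ⟨r, ⟨h1, h2, h3, h4, h5, h6⟩, rfl⟩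
      have hback : (r.rotate (n - t + 1)).rotate (t - 1) = r := by
        rw [List.rotate_rotate, show n - t + 1 + (t - 1) = n by omega, ← h2,
          List.rotate_length]
      refine ⟨?_, ?_, ?_, ?_, ?_, ?_, ?_⟩
      · intro x hx; exact h1 x (List.mem_rotate.1 hx)
      · simp [h2]
      · rw [(List.rotate_perm r (n-t+1)).sum_eq]; exact h3
      · rw [hback]; exact lt_char α r j (by omega) (by omega) h4 h5
      · intro t' ht'1 ht'2
        rw [List.rotate_rotate, show n - t + 1 + (t' - 1) = n - t + t' by omega,
          not_lt]
        exact h6 (n - t + t') (by omega) (by omega)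
      · rw [hback, List.prefix_iff_eq_take, List.length_take, hlen,
          min_eq_left (by omega), h4]
      · intro j' hj'
        rw [hback] at hj'
        by_contra hc
        rw [not_le] at hc
        have hpre : α.take (j+1) <+: r :=
          (List.take_isPrefix_take.2 (Or.inl (by omega : j + 1 ≤ j'))).trans hj'
        have htkeq : α.take (j+1) = r.take (j+1) := by
          have := List.prefix_iff_eq_take.1 hpre
          rwa [List.length_take, hlen, min_eq_left (by omega)] at this
        have := getD_of_take_eq α r j htkeq (by omega) (by omega)
        omega
  rw [himg, Set.ncard_image_of_injOn]
  intro r1 hr1 r2 hr2 heq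
  have e1 : (r1.rotate (n-t+1)).rotate (t-1) = r1 := by
    rw [List.rotate_rotate, show n - t + 1 + (t - 1) = n by omega, ← hr1.2.1,
      List.rotate_length]
  have e2 : (r2.rotate (n-t+1)).rotate (t-1) = r2 := by
    rw [List.rotate_rotate, show n - t + 1 + (t - 1) = n by omega, ← hr2.2.1,
      List.rotate_length]
  rw [← e1, ← e2]
  simp only at heq
  rw [heq]


def BSet (k : ℕ) (α : List ℕ) (t j : ℕ) (w : ℤ) : Set (List ℕ) :=
  {s : List ℕ | IsStr k s ∧ s.length = t ∧ w ≤ (s.sum : ℤ) ∧ α.take j <+: s ∧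
    ∀ suf : List ℕ, suf ≠ [] → suf <:+ s → α < suf}


section Main
variable {n k w t j z : ℕ} {α : List ℕ}

-- context hypotheses
variable (hlen : α.length = n) (hneck : IsNecklace α) (hstr : IsStr k α)
variable (ht1 : 1 ≤ t) (htn : t ≤ n) (hjlt : j < n) (hmj : n - t + 1 + z ≤ j)
variable (h0 : (α.take j).drop (j - z) = α.take z)
variable (hmax' : ∀ p, n - t + 1 + p ≤ j → (α.take j).drop (j - p) = α.take p → p ≤ z)

include hlen hjlt in
lemma rdrop_eq (r : List ℕ) (hrlen : r.length = n) (hrtake : r.take j = α.take j)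
    (i : ℕ) (hij : i ≤ j) : r.drop i = (α.take j).drop i ++ r.drop j := by
  conv_lhs => rw [← List.take_append_drop j r]
  rw [List.drop_append_of_le_length (by simp [hrlen]; omega), hrtake]

include hlen hneck hjlt hmj h0 in
lemma match_le (p : ℕ) (hpz : p ≤ z) (hmatch : (α.take j).drop (j - p) = α.take p) :
    α.getD p 0 ≤ α.getD z 0 := by
  have hzn : z < n := by omega
  have hsub : (α.take z).drop (z - p) = α.take p := by
    rw [← h0, List.drop_drop, show j - z + (z - p) = j - p by omega]
    exact hmatch
  have hq : (α.drop (z - p)).take p = α.take p := by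
    rw [List.drop_take, show z - (z - p) = p by omega] at hsub
    exact hsub
  have hneckp := neck_take α hneck (z - p) (p + 1) (by omega)
  rw [take_succ_getD α p (by omega),
    take_succ_getD (α.drop (z-p)) p (by simp [hlen]; omega), hq,
    getD_drop α (z-p) p (by omega), show z - p + p = z by omega] at hneckp
  exact singleton_le_singleton ((append_le_append_iff _ _ _).1 hneckp)

include hlen hneck hjlt hmj hmax' in
lemma low_rot (i : ℕ) (hi1 : n - t < i) (hij : i < j) :
    ((α.take j).drop i = α.take (j - i) ∧ j - i ≤ z) ∨
      α.take (j - i) < (α.take j).drop i := by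
  have hmono : α.take (j - i) ≤ (α.take j).drop i := by
    rw [List.drop_take]
    exact neck_take α hneck i (j - i) (by omega)
  by_cases heq : (α.take j).drop i = α.take (j - i)
  · exact Or.inl ⟨heq, hmax' (j - i) (by omega)
      (by rw [show j - (j - i) = i by omega]; exact heq)⟩
  · exact Or.inr (lt_of_le_of_ne hmono (fun h => heq h.symm))

include hlen hjlt hmj h0 in
lemma rot_jz (r : List ℕ) (hrlen : r.length = n) (hrtake : r.take j = α.take j) :
    r.rotate (j - z) = α.take z ++ (r.drop j ++ r.take (j - z)) := by
  rw [List.rotate_eq_drop_append_take (by omega : j - z ≤ r.length),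
    rdrop_eq hlen hjlt r hrlen hrtake (j - z) (by omega), h0, List.append_assoc]

include hlen hjlt hmj h0 in
lemma RS_lower (r : List ℕ) (hr : r ∈ RSet k n w α t j) : α.getD z 0 ≤ r.getD j 0 := by
  obtain ⟨h1, h2, h3, h4, h5, h6⟩ := hr
  by_contra hc
  rw [not_le] at hc
  have hrot := h6 (j - z) (by omega) (by omega)
  have hlt : r.rotate (j - z) < α := by
    rw [rot_jz hlen hjlt hmj h0 r h2 h4, drop_eq_getD_cons r j (by omega),
      List.cons_append]
    refine lt_of_drop_lt _ _ z ?_ ?_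
    · rw [List.take_left' (by simp [hlen]; omega)]
    · rw [List.drop_left' (by simp [hlen]; omega), drop_eq_getD_cons α z (by omega)]
      exact List.Lex.rel hc
  exact absurd hrot (not_le.2 hlt)

include hlen hjlt hmj h0 in
lemma RS_empty (hle : α.getD j 0 ≤ α.getD z 0) : RSet k n w α t j = ∅ := by
  ext r
  simp only [Set.mem_empty_iff_false, iff_false]
  intro hr
  have := RS_lower hlen hjlt hmj h0 r hr
  have h5 := hr.2.2.2.2.1
  omega

end Main

section Main2
variable {n k w t j z : ℕ} {α : List ℕ}
variable (hlen : α.length = n) (hneck : IsNecklace α) (hstr : IsStr k α)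
variable (ht1 : 1 ≤ t) (htn : t ≤ n) (hjlt : j < n) (hmj : n - t + 1 + z ≤ j)
variable (h0 : (α.take j).drop (j - z) = α.take z)
variable (hmax' : ∀ p, n - t + 1 + p ≤ j → (α.take j).drop (j - p) = α.take p → p ≤ z)

-- the nonmatch rotation bound, shared
include hlen hneck hjlt hmj hmax' in
lemma nonmatch_rot (r : List ℕ) (hrlen : r.length = n) (hrtake : r.take j = α.take j)
    (i : ℕ) (hi1 : n - t < i) (hij : i < j)
    (hstrict : α.take (j - i) < (α.take j).drop i) : α < r.rotate i := by
  have hrot : r.rotate i = (α.take j).drop i ++ (r.drop j ++ r.take i) := by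
    rw [List.rotate_eq_drop_append_take (by omega : i ≤ r.length),
      rdrop_eq hlen hjlt r hrlen hrtake i (by omega), List.append_assoc]
  have h2 := append_lt_append (α.take (j - i)) ((α.take j).drop i)
    (α.drop (j - i)) (r.drop j ++ r.take i) hstrict
    (by simp [hlen]; omega)
  rw [List.take_append_drop] at h2
  rw [hrot]
  exact h2

include hlen hneck hstr ht1 htn hjlt hmj h0 hmax' in
lemma fa_mem (haz : α.getD z 0 < α.getD j 0) (β : List ℕ)
    (hβ : β ∈ BSet k α (n - j + z) (z + 1) ((w : ℤ) - ((α.take (j - z)).sum : ℤ))) :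
    (α.take (j - z) ++ β) ∈ RSet k n w α t j ∧
      (α.take (j - z) ++ β).getD j 0 = α.getD z 0 := by
  obtain ⟨hb1, hb2, hb3, hb4, hb5⟩ := hβ
  have hzn : z < n := by omega
  have htlen : (α.take (j - z)).length = j - z := by simp [hlen]; omega
  have hβtake : β.take (z + 1) = α.take (z + 1) := by
    have := List.prefix_iff_eq_take.1 hb4
    rw [List.length_take, hlen, min_eq_left (by omega)] at this
    exact this.symm
  have hβz : β.getD z 0 = α.getD z 0 :=
    getD_of_take_eq β α z hβtake (by omega) (by omega)
  -- take j
  have hrtake : (α.take (j - z) ++ β).take j = α.take j := by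
    have h1 := List.take_length_add_append (l₁ := α.take (j - z)) (l₂ := β) z
    rw [htlen, show j - z + z = j by omega] at h1
    have hβtkz : β.take z = α.take z := by
      have := congrArg (List.take z) hβtake
      rwa [List.take_take, min_eq_left (by omega), List.take_take,
        min_eq_left (by omega)] at this
    rw [h1, hβtkz, ← h0]
    rw [show α.take (j - z) = (α.take j).take (j - z) by
      rw [List.take_take, min_eq_left (by omega)], List.take_append_drop]
  -- getD j
  have hrj : (α.take (j - z) ++ β).getD j 0 = α.getD z 0 := by
    have h1 := getD_append_right (α.take (j - z)) β z
    rw [htlen, show j - z + z = j by omega] at h1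
    rw [h1, hβz]
  have hrlen : (α.take (j - z) ++ β).length = n := by simp [hlen, hb2]; omega
  refine ⟨⟨?_, hrlen, ?_, hrtake, ?_, ?_⟩, hrj⟩
  · intro x hx
    rcases List.mem_append.1 hx with hx | hx
    · exact hstr x (List.mem_of_mem_take hx)
    · exact hb1 x hx
  · -- sum
    have hs : (α.take (j - z) ++ β).sum = (α.take (j - z)).sum + β.sum := by
      simp
    omega
  · rw [hrj]; exact haz
  · -- rotation conditions
    intro i hi1 hi2
    rcases lt_or_ge i (j - z) with hlt | hge
    · rcases low_rot hlen hneck hjlt hmj hmax' i hi1 (by omega) with ⟨-, hle⟩ | hstrict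
      · omega
      · exact le_of_lt (nonmatch_rot hlen hneck hjlt hmj hmax' _ hrlen hrtake i hi1
          (by omega) hstrict)
    · -- suffix of β
      have hdrop : (α.take (j - z) ++ β).drop i = β.drop (i - (j - z)) := by
        have h1 := List.drop_length_add_append (l₁ := α.take (j - z)) (l₂ := β) (i - (j - z))
        rw [htlen, show j - z + (i - (j - z)) = i by omega] at h1
        exact h1
      have hsuf : α < β.drop (i - (j - z)) := by
        refine hb5 _ ?_ (List.drop_suffix _ _)
        intro hnil
        have := congrArg List.length hnil
        simp [hb2] at this
        omega
      have : α < ((α.take (j - z) ++ β).drop i) ++ ((α.take (j - z) ++ β).take i) := by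
        rw [hdrop]
        exact lt_append_of_lt_of_le _ _ _ hsuf (by simp [hb2, hlen]; omega)
      rw [List.rotate_eq_drop_append_take (by omega : i ≤ (α.take (j - z) ++ β).length)]
      exact le_of_lt this

end Main2

section Main3
variable {n k w t j z : ℕ} {α : List ℕ}
variable (hlen : α.length = n) (hneck : IsNecklace α) (hstr : IsStr k α)
variable (ht1 : 1 ≤ t) (htn : t ≤ n) (hjlt : j < n) (hmj : n - t + 1 + z ≤ j)
variable (h0 : (α.take j).drop (j - z) = α.take z)
variable (hmax' : ∀ p, n - t + 1 + p ≤ j → (α.take j).drop (j - p) = α.take p → p ≤ z)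

include hlen hneck hstr ht1 htn hjlt hmj h0 hmax' in
lemma fb_mem (x : ℕ) (hx1 : α.getD z 0 < x) (hx2 : x < α.getD j 0) (γ : List ℕ)
    (hγ : γ ∈ BSet k α (n - j - 1) 0 ((w : ℤ) - ((α.take j).sum : ℤ) - (x : ℤ))) :
    (α.take j ++ x :: γ) ∈ RSet k n w α t j ∧
      (α.take j ++ x :: γ).getD j 0 = x := by
  obtain ⟨hb1, hb2, hb3, -, hb5⟩ := hγ
  have hzn : z < n := by omega
  have htlen : (α.take j).length = j := by simp [hlen]; omega
  have hrlen : (α.take j ++ x :: γ).length = n := by simp [hlen, hb2]; omega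
  have hrtake : (α.take j ++ x :: γ).take j = α.take j :=
    List.take_left' htlen
  have hrj : (α.take j ++ x :: γ).getD j 0 = x := by
    have h1 := getD_append_right (α.take j) (x :: γ) 0
    rw [htlen, Nat.add_zero] at h1
    exact h1
  have hrdropj : (α.take j ++ x :: γ).drop j = x :: γ := List.drop_left' htlen
  refine ⟨⟨?_, hrlen, ?_, hrtake, ?_, ?_⟩, hrj⟩
  · intro y hy
    rcases List.mem_append.1 hy with hy | hy
    · exact hstr y (List.mem_of_mem_take hy)
    · rcases List.mem_cons.1 hy with rfl | hy
      · constructor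
        · have h1 : 1 ≤ α.getD z 0 := by
            have hz := hstr (α.getD z 0) (by
              rw [List.getD_eq_getElem α 0 (by omega)]
              exact List.getElem_mem _)
            exact hz.1
          omega
        · have hj' : α.getD j 0 ≤ k := by
            have hz := hstr (α.getD j 0) (by
              rw [List.getD_eq_getElem α 0 (by omega)]
              exact List.getElem_mem _)
            exact hz.2
          omega
      · exact hb1 y hy
  · have hs : (α.take j ++ x :: γ).sum = (α.take j).sum + (x + γ.sum) := by simp
    omega
  · rw [hrj]; exact hx2
  · intro i hi1 hi2
    rcases lt_trichotomy i j with hlt | heq | hgt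
    · rcases low_rot hlen hneck hjlt hmj hmax' i hi1 hlt with ⟨heqm, hle⟩ | hstrict
      · -- match case
        have hple : α.getD (j - i) 0 ≤ α.getD z 0 :=
          match_le hlen hneck hjlt hmj h0 (j - i) hle
            (by rw [show j - (j - i) = i by omega]; exact heqm)
        have hrot : (α.take j ++ x :: γ).rotate i =
            α.take (j - i) ++ (x :: (γ ++ (α.take j ++ x :: γ).take i)) := by
          rw [List.rotate_eq_drop_append_take (by omega : i ≤ (α.take j ++ x :: γ).length),
            rdrop_eq hlen hjlt _ hrlen hrtake i (by omega), hrdropj, heqm,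
            List.append_assoc, List.cons_append]
        refine le_of_lt (lt_of_drop_lt α _ (j - i) ?_ ?_)
        · rw [hrot, List.take_left' (by simp [hlen]; omega)]
        · rw [hrot, List.drop_left' (by simp [hlen]; omega),
            drop_eq_getD_cons α (j - i) (by omega)]
          exact List.Lex.rel (by omega)
      · exact le_of_lt (nonmatch_rot hlen hneck hjlt hmj hmax' _ hrlen hrtake i hi1
          hlt hstrict)
    · -- i = j
      rw [heq]
      have hrot : (α.take j ++ x :: γ).rotate j =
          x :: (γ ++ (α.take j ++ x :: γ).take j) := by
        rw [List.rotate_eq_drop_append_take (by omega : j ≤ (α.take j ++ x :: γ).length),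
          hrdropj, List.cons_append]
      have ha0 : α.getD 0 0 ≤ α.getD z 0 :=
        match_le hlen hneck hjlt hmj h0 0 (by omega)
          (by simp)
      have he : α.getD 0 0 :: α.drop 1 = α := by
        rw [← drop_eq_getD_cons α 0 (by omega), List.drop_zero]
      have hx : List.Lex (· < ·) (α.getD 0 0 :: α.drop 1)
          (x :: (γ ++ (α.take j ++ x :: γ).take j)) := List.Lex.rel (by omega)
      rw [he] at hx
      rw [hrot]
      exact le_of_lt hx
    · -- i > j
      have hdrop : (α.take j ++ x :: γ).drop i = γ.drop (i - j - 1) := by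
        have h1 := List.drop_length_add_append (l₁ := α.take j) (l₂ := x :: γ) (i - j)
        rw [htlen, show j + (i - j) = i by omega] at h1
        obtain ⟨q, hq⟩ : ∃ q, i - j = q + 1 := ⟨i - j - 1, by omega⟩
        rw [h1, hq, List.drop_succ_cons, Nat.add_sub_cancel]
      have hsuf : α < γ.drop (i - j - 1) := by
        refine hb5 _ ?_ (List.drop_suffix _ _)
        intro hnil
        have := congrArg List.length hnil
        simp [hb2] at this
        omega
      rw [List.rotate_eq_drop_append_take (by omega : i ≤ (α.take j ++ x :: γ).length),
        hdrop]
      exact le_of_lt (lt_append_of_lt_of_le _ _ _ hsuf (by simp [hb2, hlen]; omega))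
end Main3

section Main4
variable {n k w t j z : ℕ} {α : List ℕ}
variable (hlen : α.length = n) (hneck : IsNecklace α) (hstr : IsStr k α)
variable (ht1 : 1 ≤ t) (htn : t ≤ n) (hjlt : j < n) (hmj : n - t + 1 + z ≤ j)
variable (h0 : (α.take j).drop (j - z) = α.take z)
variable (hmax' : ∀ p, n - t + 1 + p ≤ j → (α.take j).drop (j - p) = α.take p → p ≤ z)

include hlen hneck hjlt in
lemma RS_suffix (r : List ℕ) (hr : r ∈ RSet k n w α t j) (i : ℕ)
    (hi1 : n - t < i) (hi2 : i < n) : α < r.drop i := by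
  obtain ⟨h1, h2, h3, h4, h5, h6⟩ := hr
  exact suffix_key α r (by rw [h2, hlen]) hneck
    (lt_char α r j (by omega) (by omega) h4 h5) i (by omega) (by omega)
    (h6 i hi1 hi2)

include hlen hneck hjlt hmj h0 in
lemma fa_inv (r : List ℕ) (hr : r ∈ RSet k n w α t j)
    (hrj : r.getD j 0 = α.getD z 0) :
    r = α.take (j - z) ++ r.drop (j - z) ∧
      r.drop (j - z) ∈ BSet k α (n - j + z) (z + 1)
        ((w : ℤ) - ((α.take (j - z)).sum : ℤ)) := by
  obtain ⟨h1, h2, h3, h4, h5, h6⟩ := hr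
  have hzn : z < n := by omega
  have htk : r.take (j - z) = α.take (j - z) := by
    have := congrArg (List.take (j - z)) h4
    rwa [List.take_take, min_eq_left (by omega), List.take_take,
      min_eq_left (by omega)] at this
  have hsplit : r = α.take (j - z) ++ r.drop (j - z) := by
    rw [← htk, List.take_append_drop]
  have hdlen : (r.drop (j - z)).length = n - j + z := by simp [h2]; omega
  have hdeq : r.drop (j - z) = α.take z ++ r.drop j := by
    rw [rdrop_eq hlen hjlt r h2 h4 (j - z) (by omega), h0]
  refine ⟨hsplit, ?_, hdlen, ?_, ?_, ?_⟩
  · intro y hy; exact h1 y (List.mem_of_mem_drop hy)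
  · -- sum
    have hs := List.sum_take_add_sum_drop r (j - z)
    rw [htk] at hs
    omega
  · -- prefix
    rw [List.prefix_iff_eq_take, List.length_take, hlen, min_eq_left (by omega)]
    rw [hdeq]
    have h1' := List.take_length_add_append (l₁ := α.take z) (l₂ := r.drop j) 1
    rw [List.length_take, hlen, min_eq_left (by omega)] at h1'
    rw [h1', drop_eq_getD_cons r j (by omega), List.take_cons, hrj,
      take_succ_getD α z (by omega)]
    · simp
    · omega
  · -- suffixes
    intro suf hne hsuf
    have hsl := List.IsSuffix.length_le hsuf
    have hslpos : 0 < suf.length := List.length_pos_iff.2 hne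
    have heq := List.suffix_iff_eq_drop.1 hsuf
    rw [hdlen] at heq hsl
    set p := n - j + z - suf.length with hp
    have : suf = r.drop (j - z + p) := by rw [heq, List.drop_drop]
    rw [this]
    exact RS_suffix hlen hneck hjlt r ⟨h1, h2, h3, h4, h5, h6⟩ (j - z + p)
      (by omega) (by omega)

include hlen hneck hjlt hmj in
lemma fb_inv (r : List ℕ) (hr : r ∈ RSet k n w α t j) :
    r = α.take j ++ r.getD j 0 :: r.drop (j + 1) ∧
      r.drop (j + 1) ∈ BSet k α (n - j - 1) 0
        ((w : ℤ) - ((α.take j).sum : ℤ) - (r.getD j 0 : ℤ)) := by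
  obtain ⟨h1, h2, h3, h4, h5, h6⟩ := hr
  have hsplit : r = α.take j ++ r.getD j 0 :: r.drop (j + 1) := by
    rw [← h4, ← drop_eq_getD_cons r j (by omega), List.take_append_drop]
  refine ⟨hsplit, ?_, by simp [h2]; omega, ?_, by simp, ?_⟩
  · intro y hy; exact h1 y (List.mem_of_mem_drop hy)
  · -- sum
    have hs := List.sum_take_add_sum_drop r j
    rw [h4, drop_eq_getD_cons r j (by omega), List.sum_cons] at hs
    omega
  · intro suf hne hsuf
    have hsl := List.IsSuffix.length_le hsuf
    have hslpos : 0 < suf.length := List.length_pos_iff.2 hne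
    have heq := List.suffix_iff_eq_drop.1 hsuf
    rw [List.length_drop, h2] at heq hsl
    set p := n - (j + 1) - suf.length with hp
    have : suf = r.drop (j + 1 + p) := by rw [heq, List.drop_drop]
    rw [this]
    exact RS_suffix hlen hneck hjlt r ⟨h1, h2, h3, h4, h5, h6⟩ (j + 1 + p)
      (by omega) (by omega)
end Main4

section Main5
variable {n k w t j z : ℕ} {α : List ℕ}
variable (hlen : α.length = n) (hneck : IsNecklace α) (hstr : IsStr k α)
variable (ht1 : 1 ≤ t) (htn : t ≤ n) (hjlt : j < n) (hmj : n - t + 1 + z ≤ j)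
variable (h0 : (α.take j).drop (j - z) = α.take z)
variable (hmax' : ∀ p, n - t + 1 + p ≤ j → (α.take j).drop (j - p) = α.take p → p ≤ z)

include hlen hneck hstr ht1 htn hjlt hmj h0 hmax' in
lemma RS_union (haz : α.getD z 0 < α.getD j 0) :
    RSet k n w α t j =
      ((fun β => α.take (j - z) ++ β) ''
          BSet k α (n - j + z) (z + 1) ((w : ℤ) - ((α.take (j - z)).sum : ℤ)))
      ∪ ⋃ x ∈ Finset.Ioo (α.getD z 0) (α.getD j 0),
          ((fun γ => α.take j ++ x :: γ) ''
            BSet k α (n - j - 1) 0 ((w : ℤ) - ((α.take j).sum : ℤ) - (x : ℤ))) := by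
  ext r
  constructor
  · intro hr
    have hlow := RS_lower hlen hjlt hmj h0 r hr
    rcases eq_or_lt_of_le hlow with heq | hlt
    · left
      obtain ⟨hsplit, hmem⟩ := fa_inv hlen hneck hjlt hmj h0 r hr heq.symm
      exact ⟨r.drop (j - z), hmem, hsplit.symm⟩
    · right
      obtain ⟨hsplit, hmem⟩ := fb_inv hlen hneck hjlt hmj r hr
      refine Set.mem_iUnion₂.2 ⟨r.getD j 0,
        Finset.mem_Ioo.2 ⟨hlt, hr.2.2.2.2.1⟩, ?_⟩
      exact ⟨r.drop (j + 1), hmem, hsplit.symm⟩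
  · rintro (⟨β, hβ, rfl⟩ | hr)
    · exact (fa_mem hlen hneck hstr ht1 htn hjlt hmj h0 hmax' haz β hβ).1
    · obtain ⟨x, hx, γ, hγ, rfl⟩ := Set.mem_iUnion₂.1 hr
      have hxm := Finset.mem_Ioo.1 hx
      exact (fb_mem hlen hneck hstr ht1 htn hjlt hmj h0 hmax' x hxm.1 hxm.2 γ hγ).1

include hlen hneck hstr ht1 htn hjlt hmj h0 hmax' in
lemma RS_card (haz : α.getD z 0 < α.getD j 0) :
    (RSet k n w α t j).ncard =
      (BSet k α (n - j + z) (z + 1) ((w : ℤ) - ((α.take (j - z)).sum : ℤ))).ncard +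
        ∑ x ∈ Finset.Ioo (α.getD z 0) (α.getD j 0),
          (BSet k α (n - j - 1) 0 ((w : ℤ) - ((α.take j).sum : ℤ) - (x : ℤ))).ncard := by
  set Ba := BSet k α (n - j + z) (z + 1) ((w : ℤ) - ((α.take (j - z)).sum : ℤ)) with hBa
  set Bb := fun x : ℕ => BSet k α (n - j - 1) 0 ((w : ℤ) - ((α.take j).sum : ℤ) - (x : ℤ))
    with hBb
  have hfinB : ∀ (c : ℕ) (jj : ℕ) (ww : ℤ), (BSet k α c jj ww).Finite := by
    intro c jj ww
    exact finite_str k c _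
  have hfa : Function.Injective (fun β : List ℕ => α.take (j - z) ++ β) :=
    List.append_right_injective _
  have hfb : ∀ x : ℕ, Function.Injective (fun γ : List ℕ => α.take j ++ x :: γ) := by
    intro x a b hab
    simp only [List.append_cancel_left_eq, List.cons.injEq] at hab
    exact hab.2
  -- getD facts for disjointness
  have hgA : ∀ r ∈ (fun β : List ℕ => α.take (j - z) ++ β) '' Ba,
      r.getD j 0 = α.getD z 0 := by
    rintro r ⟨β, hβ, rfl⟩
    exact (fa_mem hlen hneck hstr ht1 htn hjlt hmj h0 hmax' haz β hβ).2
  have hgB : ∀ x, ∀ r ∈ (fun γ : List ℕ => α.take j ++ x :: γ) '' Bb x,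
      r.getD j 0 = x := by
    rintro x r ⟨γ, hγ, rfl⟩
    have htlen : (α.take j).length = j := by simp [hlen]; omega
    have h1 := getD_append_right (α.take j) (x :: γ) 0
    rw [htlen, Nat.add_zero] at h1
    exact h1
  rw [RS_union hlen hneck hstr ht1 htn hjlt hmj h0 hmax' haz]
  rw [Set.ncard_union_eq ?disj ?f1 ?f2]
  · rw [Set.ncard_image_of_injective _ hfa,
      ncard_biUnion _ _ (fun x _ => (hfinB _ _ _).image _) ?pd]
    case pd =>
      intro x hx y hy hxy
      refine Set.disjoint_left.2 ?_
      intro r hrx hry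
      rw [← hgB x r hrx, hgB y r hry] at hxy
      exact hxy rfl
    congr 1
    refine Finset.sum_congr rfl ?_
    intro x hx
    exact Set.ncard_image_of_injective _ (hfb x)
  case disj =>
    refine Set.disjoint_left.2 ?_
    intro r hra hrb
    obtain ⟨x, hx, hrx⟩ := Set.mem_iUnion₂.1 hrb
    have h1 := hgA r hra
    have h2 := hgB x r hrx
    have := (Finset.mem_Ioo.1 hx).1
    omega
  case f1 => exact (hfinB _ _ _).image _
  case f2 =>
    rw [← Finset.set_biUnion_coe]
    exact Set.Finite.biUnion (Finset.finite_toSet _)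
      (fun x _ => (hfinB _ _ _).image _)
end Main5


end AC2

/-- Case 2 (`t + j > n`) of the formula for `A(t,j)`.  Here `z` is the length of the
longest suffix of `a_{n-t+2}⋯a_j` (i.e. of `(α.take j).drop (n-t+1)`) equal to the
prefix `a₁⋯a_z` of `α`.  If `a_{j+1} > a_{z+1}` then
`A(t,j) = B(n-j+z, z+1, w - wt(a₁⋯a_{j-z})) + Σ_{x=a_{z+1}+1}^{a_{j+1}-1} B(n-j-1, 0, w - wt(a₁⋯a_j) - x)`,
and otherwise `A(t,j) = 0`. -/
theorem Acount_case2
    (n k w : ℕ) (hn : 1 < n) (hk : 1 < k) (α : List ℕ)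
    (hstr : IsStr k α) (hlen : α.length = n) (hwt : w ≤ α.sum) (hneck : IsNecklace α)
    (t j : ℕ) (ht1 : 1 ≤ t) (htn : t ≤ n) (hj : j ≤ n - 1) (htj : n < t + j)
    (z : ℕ) (hzlen : z ≤ ((α.take j).drop (n - t + 1)).length)
    (hzeq : ((α.take j).drop (n - t + 1)).drop
        (((α.take j).drop (n - t + 1)).length - z) = α.take z)
    (hzmax : ∀ z' : ℕ, z' ≤ ((α.take j).drop (n - t + 1)).length →
      ((α.take j).drop (n - t + 1)).drop
          (((α.take j).drop (n - t + 1)).length - z') = α.take z' →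
      z' ≤ z) :
    (α.getD z 0 < α.getD j 0 →
      Acount k n w α t j =
        Bcount k α (n - j + z) (z + 1) ((w : ℤ) - ((α.take (j - z)).sum : ℤ)) +
          ∑ x ∈ Finset.Ioo (α.getD z 0) (α.getD j 0),
            Bcount k α (n - j - 1) 0 ((w : ℤ) - ((α.take j).sum : ℤ) - (x : ℤ))) ∧
    (α.getD j 0 ≤ α.getD z 0 → Acount k n w α t j = 0) := by
  have hjlt : j < n := by omega
  have hLlen : ((α.take j).drop (n - t + 1)).length = j - (n - t + 1) := by
    rw [List.length_drop, List.length_take, hlen]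
    omega
  have hzlen' : z ≤ j - (n - t + 1) := by rw [hLlen] at hzlen; exact hzlen
  have hmj : n - t + 1 + z ≤ j := by omega
  have h0 : (α.take j).drop (j - z) = α.take z := by
    rw [hLlen, List.drop_drop] at hzeq
    rwa [show n - t + 1 + (j - (n - t + 1) - z) = j - z by omega] at hzeq
  have hmax' : ∀ p, n - t + 1 + p ≤ j → (α.take j).drop (j - p) = α.take p → p ≤ z := by
    intro p hp heq
    refine hzmax p ?_ ?_
    · rw [hLlen]; omega
    · rw [hLlen, List.drop_drop,
        show n - t + 1 + (j - (n - t + 1) - p) = j - p by omega]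
      exact heq
  constructor
  · intro haz
    rw [AC2.Acount_eq n k w α hlen t j ht1 htn hjlt,
      AC2.RS_card hlen hneck hstr ht1 htn hjlt hmj h0 hmax' haz]
    rfl
  · intro hle
    rw [AC2.Acount_eq n k w α hlen t j ht1 htn hjlt,
      AC2.RS_empty hlen hjlt hmj h0 hle]
    simp
end
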